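/- Let G be the graph on 17 vertices {z, y_0, y_1, …, y_15} whose edges are: z y_i for all i ∈ {0,…,15}; y_i y_{i+1 mod 16} for all i ∈ {0,…,15}; y_i y_{i+2 mod 16} for all even i ∈ {0,…,15}; and y_i y_{i+4 mod 16} for all i ∈ {0,…,15} divisible by 4. Then G is a simple planar graph with minimum degree at least 3 and maximum degree 16, and G is positively curved, i.e., κ_LLY(u,v) > 0 for every edge uv of G. -/

import Mathlib

open Filter Set

variable {V : Type*}

-- The `α`-lazy random walk distribution at vertex `x`.
open Classical in
noncomputable def lazyWalk (G : SimpleGraph V) [G.LocallyFinite] (α : ℝ) (x : V) : V → ℝ :=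
  fun v => if v = x then α else if G.Adj x v then (1 - α) / (G.degree x : ℝ) else 0

/-- `A` is a coupling between the finitely supported distributions `m₁` and `m₂`. -/
def IsCoupling (m₁ m₂ : V → ℝ) (A : V → V → ℝ) : Prop :=
  (Function.support fun p : V × V => A p.1 p.2).Finite ∧
  (∀ x y, 0 ≤ A x y ∧ A x y ≤ 1) ∧
  (∀ x, ∑ᶠ y, A x y = m₁ x) ∧
  (∀ y, ∑ᶠ x, A x y = m₂ y)

/-- The transportation (Wasserstein) distance between two distributions on `V`,
with respect to the graph distance of `G`. -/
noncomputable def transportDist (G : SimpleGraph V) (m₁ m₂ : V → ℝ) : ℝ :=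
  sInf {w : ℝ | ∃ A : V → V → ℝ, IsCoupling m₁ m₂ A ∧
    w = ∑ᶠ p : V × V, A p.1 p.2 * (G.dist p.1 p.2 : ℝ)}

/-- The `α`-Ricci curvature `κ_α(x,y)`. -/
noncomputable def alphaRicci (G : SimpleGraph V) [G.LocallyFinite] (α : ℝ) (x y : V) : ℝ :=
  1 - transportDist G (lazyWalk G α x) (lazyWalk G α y) / (G.dist x y : ℝ)

/-- `κ` is the Lin–Lu–Yau Ricci curvature of the pair `(x,y)`:
the limit of `κ_α(x,y)/(1-α)` as `α → 1⁻`. -/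
def HasLLYCurv (G : SimpleGraph V) [G.LocallyFinite] (x y : V) (κ : ℝ) : Prop :=
  Tendsto (fun α : ℝ => alphaRicci G α x y / (1 - α)) (nhdsWithin 1 (Set.Iio 1)) (nhds κ)

/-- `G` is positively curved: every edge has positive Lin–Lu–Yau Ricci curvature. -/
def PositivelyCurved (G : SimpleGraph V) [G.LocallyFinite] : Prop :=
  ∀ ⦃x y : V⦄, G.Adj x y → ∃ κ : ℝ, 0 < κ ∧ HasLLYCurv G x y κ

/-- `G` is planar: it admits a topological embedding in the plane, i.e. an injective
placement of the vertices together with arcs for the edges, where arcs are injective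
continuous curves joining the endpoints, not passing through any other vertex, and
two arcs of distinct edges meet only in common endpoints. -/
def IsPlanar (G : SimpleGraph V) : Prop :=
  ∃ (f : V → ℝ × ℝ) (e : ∀ u v : V, G.Adj u v → Set.Icc (0:ℝ) 1 → ℝ × ℝ),
    Function.Injective f ∧
    (∀ u v (h : G.Adj u v), Continuous (e u v h)) ∧
    (∀ u v (h : G.Adj u v), Function.Injective (e u v h)) ∧
    (∀ u v (h : G.Adj u v),
      e u v h ⟨0, Set.left_mem_Icc.mpr zero_le_one⟩ = f u ∧
      e u v h ⟨1, Set.right_mem_Icc.mpr zero_le_one⟩ = f v) ∧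
    (∀ u v (h : G.Adj u v) (w : V), w ≠ u → w ≠ v → f w ∉ Set.range (e u v h)) ∧
    (∀ u v (h : G.Adj u v) (u' v' : V) (h' : G.Adj u' v'), ({u, v} : Set V) ≠ {u', v'} →
      Set.range (e u v h) ∩ Set.range (e u' v' h') ⊆ (f '' {u, v}) ∩ (f '' {u', v'}))

/-- The planar graph on 17 vertices `{z} ∪ {y_i : i ∈ ZMod 16}` (with `z = none` and
`y_i = some i`): edges are `z y_i` for all `i`, `y_i y_{i+1}` for all `i`,
`y_i y_{i+2}` for even `i`, and `y_i y_{i+4}` for `i` divisible by `4`. -/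
def extremalGraph : SimpleGraph (Option (ZMod 16)) :=
  SimpleGraph.fromRel fun u w =>
    (u = none ∧ w ≠ none) ∨
    (∃ i : ZMod 16, u = some i ∧ w = some (i + 1)) ∨
    (∃ i : ZMod 16, i.val % 2 = 0 ∧ u = some i ∧ w = some (i + 2)) ∨
    (∃ i : ZMod 16, i.val % 4 = 0 ∧ u = some i ∧ w = some (i + 4))

noncomputable instance : extremalGraph.LocallyFinite := fun _ => Fintype.ofFinite _


-- ===== auxiliary development =====
-- fast adjacency table
abbrev Vx := Option (ZMod 16)
def ι : Vx → ℕ := fun v => v.elim 0 (fun i => i.val + 1)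
def NBR : List (List ℕ) := [[1, 2, 3, 4, 5, 6, 7, 8, 9, 10, 11, 12, 13, 14, 15, 16], [0, 2, 3, 5, 13, 15, 16], [0, 1, 3], [0, 1, 2, 4, 5], [0, 3, 5], [0, 1, 3, 4, 6, 7, 9], [0, 5, 7], [0, 5, 6, 8, 9], [0, 7, 9], [0, 5, 7, 8, 10, 11, 13], [0, 9, 11], [0, 9, 10, 12, 13], [0, 11, 13], [0, 1, 9, 11, 12, 14, 15], [0, 13, 15], [0, 1, 13, 14, 16], [0, 1, 15]]
def adjT (u v : Vx) : Bool := (NBR.getD (ι u) []).contains (ι v)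

lemma adjT_iff0 : ∀ u v : Vx, adjT u v = true ↔ (u ≠ v ∧
    (((u = none ∧ v ≠ none) ∨
    (∃ i : ZMod 16, u = some i ∧ v = some (i + 1)) ∨
    (∃ i : ZMod 16, i.val % 2 = 0 ∧ u = some i ∧ v = some (i + 2)) ∨
    (∃ i : ZMod 16, i.val % 4 = 0 ∧ u = some i ∧ v = some (i + 4))) ∨
    ((v = none ∧ u ≠ none) ∨
    (∃ i : ZMod 16, v = some i ∧ u = some (i + 1)) ∨
    (∃ i : ZMod 16, i.val % 2 = 0 ∧ v = some i ∧ u = some (i + 2)) ∨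
    (∃ i : ZMod 16, i.val % 4 = 0 ∧ v = some i ∧ u = some (i + 4))))) := by decide

instance : DecidableRel extremalGraph.Adj := fun u v =>
  decidable_of_iff _ ((adjT_iff0 u v).trans
    (SimpleGraph.fromRel_adj (fun u w =>
      (u = none ∧ w ≠ none) ∨
      (∃ i : ZMod 16, u = some i ∧ w = some (i + 1)) ∨
      (∃ i : ZMod 16, i.val % 2 = 0 ∧ u = some i ∧ w = some (i + 2)) ∨
      (∃ i : ZMod 16, i.val % 4 = 0 ∧ u = some i ∧ w = some (i + 4))) u v).symm)

lemma deg_eq (u : Vx) :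
    extremalGraph.degree u = (Finset.univ.filter (extremalGraph.Adj u)).card := by
  rw [← SimpleGraph.card_neighborSet_eq_degree]
  convert Fintype.card_subtype (extremalGraph.Adj u) using 2
  rfl

def degQ : Vx → ℚ := fun v => ((Finset.univ.filter (extremalGraph.Adj v)).card : ℚ)

lemma degQ_cast (v : Vx) : ((extremalGraph.degree v : ℝ)) = ((degQ v : ℚ) : ℝ) := by
  rw [deg_eq]; norm_num [degQ]

lemma degQ_pos (v : Vx) : 0 < degQ v := by
  have : ∀ v : Vx, 0 < degQ v := by decide
  exact this v

-- distance
def dQ (u v : Vx) : ℚ := if u = v then 0 else if extremalGraph.Adj u v then 1 else 2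

lemma dist_eval (u v : Vx) : ((extremalGraph.dist u v : ℕ) : ℝ) = ((dQ u v : ℚ) : ℝ) := by
  unfold dQ
  by_cases h : u = v
  · simp [h]
  · rw [if_neg h]
    by_cases h2 : extremalGraph.Adj u v
    · rw [if_pos h2, SimpleGraph.dist_eq_one_iff_adj.mpr h2]; norm_num
    · rw [if_neg h2]
      have hnn : u ≠ none ∨ v ≠ none → True := fun _ => trivial
      have hzadj : ∀ w : Vx, w ≠ none → extremalGraph.Adj none w := by decide
      have hu : u ≠ none := by
        rintro rfl; exact h2 (hzadj v (fun hv => h hv.symm))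
      have hv : v ≠ none := by
        rintro rfl; exact h2 ((hzadj u hu).symm)
      have hd2 : extremalGraph.dist u v = 2 := by
        have h1 : extremalGraph.Adj u none := (hzadj u hu).symm
        have hw : extremalGraph.dist u v ≤ 2 := by
          have := SimpleGraph.dist_le (SimpleGraph.Walk.cons h1
            (SimpleGraph.Walk.cons (hzadj v hv) SimpleGraph.Walk.nil))
          simpa using this
        have hre : extremalGraph.Reachable u v :=
          SimpleGraph.Adj.reachable h1 |>.trans (SimpleGraph.Adj.reachable (hzadj v hv))
        have hp : 0 < extremalGraph.dist u v := hre.pos_dist_of_ne h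
        have hne1 : extremalGraph.dist u v ≠ 1 := fun hc =>
          h2 (SimpleGraph.dist_eq_one_iff_adj.mp hc)
        omega
      rw [hd2]; norm_num




lemma finsum_fintype {W : Type*} [Fintype W] (f : W → ℝ) : ∑ᶠ w, f w = ∑ w, f w :=
  finsum_eq_sum_of_fintype f

lemma transport_le {W : Type*} (G : SimpleGraph W) (m1 m2 : W → ℝ) (A : W → W → ℝ)
    (hA : IsCoupling m1 m2 A) :
    transportDist G m1 m2 ≤ ∑ᶠ p : W × W, A p.1 p.2 * (G.dist p.1 p.2 : ℝ) := by
  apply csInf_le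
  · refine ⟨0, ?_⟩
    rintro w ⟨B, hB, rfl⟩
    exact finsum_nonneg fun p => mul_nonneg (hB.2.1 _ _).1 (by positivity)
  · exact ⟨A, hA, rfl⟩

lemma transport_ge {W : Type*} [Fintype W] (G : SimpleGraph W) (m1 m2 : W → ℝ) (f : W → ℝ)
    (hf : ∀ u v : W, f u - f v ≤ (G.dist u v : ℝ))
    (A0 : W → W → ℝ) (h0 : IsCoupling m1 m2 A0) :
    (∑ x, f x * m1 x) - (∑ x, f x * m2 x) ≤ transportDist G m1 m2 := by
  refine le_csInf ⟨∑ᶠ p : W × W, A0 p.1 p.2 * (G.dist p.1 p.2 : ℝ), ⟨A0, h0, rfl⟩⟩ ?_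
  rintro w ⟨A, ⟨_, hpos, hr, hc⟩, rfl⟩
  rw [finsum_fintype]
  have h1 : ∀ x : W, m1 x = ∑ y, A x y := fun x => by rw [← hr x, finsum_fintype]
  have h2 : ∀ y : W, m2 y = ∑ x, A x y := fun y => by rw [← hc y, finsum_fintype]
  have key : (∑ x, f x * m1 x) - (∑ x, f x * m2 x)
      = ∑ p : W × W, A p.1 p.2 * (f p.1 - f p.2) := by
    rw [Fintype.sum_prod_type]
    have e1 : ∑ x, f x * m1 x = ∑ x, ∑ y, A x y * f x := by
      refine Finset.sum_congr rfl fun x _ => ?_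
      rw [h1 x, Finset.mul_sum]
      exact Finset.sum_congr rfl fun y _ => by ring
    have e2 : ∑ y, f y * m2 y = ∑ x, ∑ y, A x y * f y := by
      rw [Finset.sum_comm]
      refine Finset.sum_congr rfl fun y _ => ?_
      rw [h2 y, Finset.mul_sum]
      exact Finset.sum_congr rfl fun x _ => by ring
    rw [e1, e2, ← Finset.sum_sub_distrib]
    refine Finset.sum_congr rfl fun x _ => ?_
    rw [← Finset.sum_sub_distrib]
    exact Finset.sum_congr rfl fun y _ => by ring
  rw [key]
  apply Finset.sum_le_sum
  intro p _
  exact mul_le_mul_of_nonneg_left (hf p.1 p.2) (hpos p.1 p.2).1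

lemma hasLLY_const (G : SimpleGraph Vx) [G.LocallyFinite] (x y : Vx) (κ α0 : ℝ) (h0 : α0 < 1)
    (h : ∀ α : ℝ, α ∈ Set.Ioo α0 1 → alphaRicci G α x y = κ * (1 - α)) :
    HasLLYCurv G x y κ := by
  unfold HasLLYCurv
  have hev : (fun α : ℝ => alphaRicci G α x y / (1 - α)) =ᶠ[nhdsWithin 1 (Set.Iio 1)]
      fun _ => κ := by
    filter_upwards [Ioo_mem_nhdsLT_of_mem (show (1:ℝ) ∈ Set.Ioc α0 1 from ⟨h0, le_refl 1⟩)]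
      with a ha
    have hne : (1:ℝ) - a ≠ 0 := by
      have := ha.2
      simp only [Set.mem_Ioo] at ha
      intro hc
      linarith [ha.2]
    rw [h a ha, mul_div_assoc, div_self hne, mul_one]
  exact Tendsto.congr' hev.symm tendsto_const_nhds

-- integer-scaled lazyWalk decomposition
def degN (v : Vx) : ℕ := (Finset.univ.filter (extremalGraph.Adj v)).card

lemma degN_eq (v : Vx) : extremalGraph.degree v = degN v := deg_eq v

def pmZ (M : ℕ) (x v : Vx) : ℤ :=
  if v = x then 0 else if extremalGraph.Adj x v then ((M / degN x : ℕ) : ℤ) else 0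
def qmZ (M : ℕ) (x v : Vx) : ℤ :=
  if v = x then (M : ℤ) else if extremalGraph.Adj x v then -((M / degN x : ℕ) : ℤ) else 0
def dZ (u v : Vx) : ℤ := if u = v then 0 else if extremalGraph.Adj u v then 1 else 2

lemma dist_evalZ (u v : Vx) : ((extremalGraph.dist u v : ℕ) : ℝ) = ((dZ u v : ℤ) : ℝ) := by
  rw [dist_eval]
  unfold dQ dZ
  by_cases h : u = v
  · simp [h]
  · rw [if_neg h, if_neg h]
    by_cases h2 : extremalGraph.Adj u v
    · rw [if_pos h2, if_pos h2]; norm_num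
    · rw [if_neg h2, if_neg h2]; norm_num

lemma lazyWalk_evalZ (M : ℕ) (hM : 0 < M) (x : Vx) (hdvd : degN x ∣ M) (α : ℝ) (v : Vx) :
    lazyWalk extremalGraph α x v = ((pmZ M x v : ℝ) + (qmZ M x v : ℝ) * α) / (M : ℝ) := by
  have hMR : (0:ℝ) < (M:ℝ) := by exact_mod_cast hM
  unfold lazyWalk pmZ qmZ
  by_cases h : v = x
  · simp only [h, if_pos rfl, if_true]
    push_cast
    field_simp
    ring
  · simp only [h, if_neg h, if_false]
    by_cases h2 : extremalGraph.Adj x v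
    · rw [if_pos h2, if_pos h2, if_pos h2]
      have hdegpos : 0 < degN x := by
        rw [← degN_eq]
        exact (SimpleGraph.degree_pos_iff_exists_adj extremalGraph x).mpr ⟨v, h2⟩
      obtain ⟨c, hc⟩ := hdvd
      have hq : M / degN x = c := by rw [hc]; exact Nat.mul_div_cancel_left c hdegpos
      have hdeg : (extremalGraph.degree x : ℝ) = (degN x : ℝ) := by
        exact_mod_cast congrArg (Nat.cast : ℕ → ℝ) (degN_eq x)
      have hcpos : 0 < c := by
        rcases Nat.eq_zero_or_pos c with hc0 | hc0
        · subst hc0; simp at hc; omega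
        · exact hc0
      have hcR : (M:ℝ) = (degN x : ℝ) * (c : ℝ) := by exact_mod_cast hc
      rw [hq, hdeg]
      push_cast
      rw [hcR]
      have hdR : (0:ℝ) < (degN x : ℝ) := by exact_mod_cast hdegpos
      have hcRp : (0:ℝ) < (c : ℝ) := by exact_mod_cast hcpos
      field_simp
      ring
    · rw [if_neg h2, if_neg h2, if_neg h2]
      simp

lemma sum_splitZ {W : Type*} [Fintype W] (a b : W → ℤ) (α : ℝ) :
    ∑ w, (((a w : ℤ):ℝ) + ((b w : ℤ):ℝ) * α)
      = ((∑ w, a w : ℤ):ℝ) + ((∑ w, b w : ℤ):ℝ) * α := by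
  rw [Finset.sum_add_distrib, ← Finset.sum_mul]
  push_cast
  ring

lemma lin_nonnegZ {p q : ℤ} {α : ℝ} (h0 : 0 ≤ 10 * p + 9 * q) (h1 : 0 ≤ p + q)
    (hα : 9/10 ≤ α) (hα1 : α ≤ 1) : 0 ≤ (p:ℝ) + (q:ℝ) * α := by
  have h0' : (0:ℝ) ≤ 10 * p + 9 * q := by exact_mod_cast h0
  have h1' : (0:ℝ) ≤ (p:ℝ) + q := by exact_mod_cast h1
  rcases le_total 0 ((q:ℝ)) with hb | hb
  · nlinarith
  · nlinarith

lemma lin_leZ {p q : ℤ} {M : ℕ} {α : ℝ} (h0 : 10 * p + 9 * q ≤ 10 * M) (h1 : p + q ≤ M)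
    (hα : 9/10 ≤ α) (hα1 : α ≤ 1) : (p:ℝ) + (q:ℝ) * α ≤ (M:ℝ) := by
  have h0' : 10 * (p:ℝ) + 9 * q ≤ 10 * M := by exact_mod_cast h0
  have h1' : (p:ℝ) + q ≤ M := by exact_mod_cast h1
  rcases le_total 0 ((q:ℝ)) with hb | hb
  · nlinarith
  · nlinarith

lemma master (x y : Vx) (M : ℕ) (kn : ℤ) (Pn Qn : Vx → Vx → ℤ) (F : Vx → ℤ)
    (hadj : extremalGraph.Adj x y) (hM : 0 < M) (hκ : 0 < kn)
    (hdx : degN x ∣ M) (hdy : degN y ∣ M)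
    (hb : ∀ u v, 0 ≤ 10 * Pn u v + 9 * Qn u v ∧ 10 * Pn u v + 9 * Qn u v ≤ 10 * M ∧
                 0 ≤ Pn u v + Qn u v ∧ Pn u v + Qn u v ≤ M)
    (hm1p : ∀ u, ∑ v, Pn u v = pmZ M x u) (hm1q : ∀ u, ∑ v, Qn u v = qmZ M x u)
    (hm2p : ∀ v, ∑ u, Pn u v = pmZ M y v) (hm2q : ∀ v, ∑ u, Qn u v = qmZ M y v)
    (hcp : ∑ u, ∑ v, Pn u v * dZ u v = M - kn) (hcq : ∑ u, ∑ v, Qn u v * dZ u v = kn)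
    (hF : ∀ u v, F u - F v ≤ dZ u v)
    (hd1 : ∑ u, F u * (pmZ M x u - pmZ M y u) = M - kn)
    (hd2 : ∑ u, F u * (qmZ M x u - qmZ M y u) = kn) :
    ∃ κ' : ℝ, 0 < κ' ∧ HasLLYCurv extremalGraph x y κ' := by
  have hMR : (0:ℝ) < (M:ℝ) := by exact_mod_cast hM
  have hknR : (0:ℝ) < (kn:ℝ) := by exact_mod_cast hκ
  refine ⟨(kn:ℝ)/(M:ℝ), by positivity, ?_⟩
  apply hasLLY_const _ _ _ _ (9/10) (by norm_num)
  intro α hα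
  obtain ⟨hα0, hα1⟩ := hα
  have hα1' : α ≤ 1 := le_of_lt hα1
  have hα0' : (9/10 : ℝ) ≤ α := le_of_lt hα0
  let A : Vx → Vx → ℝ := fun u v => ((Pn u v : ℝ) + (Qn u v : ℝ) * α) / (M : ℝ)
  have hcoup : IsCoupling (lazyWalk extremalGraph α x) (lazyWalk extremalGraph α y) A := by
    refine ⟨Set.toFinite _, ?_, ?_, ?_⟩
    · intro u v
      constructor
      · apply div_nonneg _ (le_of_lt hMR)
        exact lin_nonnegZ (hb u v).1 (hb u v).2.2.1 hα0' hα1'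
      · rw [div_le_one hMR]
        exact lin_leZ (hb u v).2.1 (hb u v).2.2.2 hα0' hα1'
    · intro u
      rw [finsum_fintype]
      show ∑ w, ((Pn u w : ℝ) + (Qn u w : ℝ) * α) / (M:ℝ) = _
      rw [← Finset.sum_div, sum_splitZ (Pn u) (Qn u) α, hm1p u, hm1q u,
        ← lazyWalk_evalZ M hM x hdx α u]
    · intro v
      rw [finsum_fintype]
      show ∑ w, ((Pn w v : ℝ) + (Qn w v : ℝ) * α) / (M:ℝ) = _
      rw [← Finset.sum_div, sum_splitZ (fun u => Pn u v) (fun u => Qn u v) α, hm2p v, hm2q v,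
        ← lazyWalk_evalZ M hM y hdy α v]
  have hcost : ∑ᶠ p : Vx × Vx, A p.1 p.2 * (extremalGraph.dist p.1 p.2 : ℝ)
      = (((M:ℝ) - (kn:ℝ)) + (kn:ℝ) * α) / (M:ℝ) := by
    rw [finsum_fintype, Fintype.sum_prod_type]
    have hterm : ∀ u v : Vx, A u v * (extremalGraph.dist u v : ℝ)
        = ((Pn u v * dZ u v : ℤ):ℝ) / (M:ℝ) + ((Qn u v * dZ u v : ℤ):ℝ) / (M:ℝ) * α := by
      intro u v
      show ((Pn u v : ℝ) + (Qn u v : ℝ) * α) / (M:ℝ) * ((extremalGraph.dist u v : ℕ):ℝ) = _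
      rw [dist_evalZ]
      push_cast
      field_simp
    calc ∑ u, ∑ v, A u v * (extremalGraph.dist u v : ℝ)
        = ∑ u, ∑ v, (((Pn u v * dZ u v : ℤ):ℝ) + ((Qn u v * dZ u v : ℤ):ℝ) * α) / (M:ℝ) := by
          refine Finset.sum_congr rfl fun u _ => Finset.sum_congr rfl fun v _ => ?_
          rw [hterm u v]
          ring
      _ = (∑ u, ∑ v, (((Pn u v * dZ u v : ℤ):ℝ) + ((Qn u v * dZ u v : ℤ):ℝ) * α)) / (M:ℝ) := by
          rw [Finset.sum_div]
          exact Finset.sum_congr rfl fun u _ => (Finset.sum_div _ _ _).symm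
      _ = (((M:ℝ) - (kn:ℝ)) + (kn:ℝ) * α) / (M:ℝ) := by
          rw [Finset.sum_congr rfl fun u (_ : u ∈ Finset.univ) =>
            sum_splitZ (fun v => Pn u v * dZ u v) (fun v => Qn u v * dZ u v) α]
          rw [sum_splitZ (fun u => ∑ v, Pn u v * dZ u v) (fun u => ∑ v, Qn u v * dZ u v) α]
          rw [hcp, hcq]
          push_cast
          ring
  have hWle := transport_le extremalGraph _ _ A hcoup
  rw [hcost] at hWle
  have hFlip : ∀ u v : Vx, ((F u : ℤ):ℝ) - ((F v : ℤ):ℝ) ≤ (extremalGraph.dist u v : ℝ) := by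
    intro u v
    show _ ≤ ((extremalGraph.dist u v : ℕ):ℝ)
    rw [dist_evalZ]
    exact_mod_cast hF u v
  have hWge := transport_ge extremalGraph (lazyWalk extremalGraph α x)
    (lazyWalk extremalGraph α y) (fun v => ((F v : ℤ):ℝ)) hFlip A hcoup
  have hdval : (∑ u, ((F u : ℤ):ℝ) * lazyWalk extremalGraph α x u)
      - (∑ u, ((F u : ℤ):ℝ) * lazyWalk extremalGraph α y u)
      = (((M:ℝ) - (kn:ℝ)) + (kn:ℝ) * α) / (M:ℝ) := by
    have ev : ∀ (z : Vx), degN z ∣ M → ∑ u, ((F u : ℤ):ℝ) * lazyWalk extremalGraph α z u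
        = (((∑ u, F u * pmZ M z u : ℤ):ℝ) + ((∑ u, F u * qmZ M z u : ℤ):ℝ) * α) / (M:ℝ) := by
      intro z hz
      have e : ∀ u : Vx, ((F u : ℤ):ℝ) * lazyWalk extremalGraph α z u
          = (((F u * pmZ M z u : ℤ):ℝ) + ((F u * qmZ M z u : ℤ):ℝ) * α) / (M:ℝ) := by
        intro u
        rw [lazyWalk_evalZ M hM z hz α u]
        push_cast
        field_simp
      rw [Finset.sum_congr rfl fun u _ => e u, ← Finset.sum_div,
        sum_splitZ (fun u => F u * pmZ M z u) (fun u => F u * qmZ M z u) α]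
    rw [ev x hdx, ev y hdy]
    have e1 : (∑ u, F u * pmZ M x u) - (∑ u, F u * pmZ M y u) = (M:ℤ) - kn := by
      rw [← hd1, ← Finset.sum_sub_distrib]
      exact Finset.sum_congr rfl fun u _ => by ring
    have e2 : (∑ u, F u * qmZ M x u) - (∑ u, F u * qmZ M y u) = kn := by
      rw [← hd2, ← Finset.sum_sub_distrib]
      exact Finset.sum_congr rfl fun u _ => by ring
    have c1 : ((∑ u, F u * pmZ M x u : ℤ):ℝ) - ((∑ u, F u * pmZ M y u : ℤ):ℝ)
        = (M:ℝ) - (kn:ℝ) := by exact_mod_cast congrArg (Int.cast : ℤ → ℝ) e1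
    have c2 : ((∑ u, F u * qmZ M x u : ℤ):ℝ) - ((∑ u, F u * qmZ M y u : ℤ):ℝ) = (kn:ℝ) := by
      exact_mod_cast congrArg (Int.cast : ℤ → ℝ) e2
    rw [div_sub_div_same]
    congr 1
    linear_combination c1 + α * c2
  rw [hdval] at hWge
  have hW : transportDist extremalGraph (lazyWalk extremalGraph α x)
      (lazyWalk extremalGraph α y) = (((M:ℝ) - (kn:ℝ)) + (kn:ℝ) * α) / (M:ℝ) :=
    le_antisymm hWle hWge
  unfold alphaRicci
  rw [hW]
  have hd1' : extremalGraph.dist x y = 1 := SimpleGraph.dist_eq_one_iff_adj.mpr hadj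
  rw [hd1']
  have hMne : (M:ℝ) ≠ 0 := ne_of_gt hMR
  field_simp
  ring

-- ===== symmetry transfer =====
section Transfer
variable (φ : Vx ≃ Vx)

lemma degN_transfer (hAdj : ∀ u v, extremalGraph.Adj (φ u) (φ v) ↔ extremalGraph.Adj u v)
    (x : Vx) : degN (φ x) = degN x := by
  unfold degN
  apply Finset.card_bij' (fun u _ => φ.symm u) (fun u _ => φ u)
  · intro a ha
    simp only [Finset.mem_filter, Finset.mem_univ, true_and] at ha ⊢
    rw [← hAdj, φ.apply_symm_apply]
    exact ha
  · intro a ha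
    simp only [Finset.mem_filter, Finset.mem_univ, true_and] at ha ⊢
    exact (hAdj x a).mpr ha
  · intro a _; simp
  · intro a _; simp

lemma degree_transfer (hAdj : ∀ u v, extremalGraph.Adj (φ u) (φ v) ↔ extremalGraph.Adj u v)
    (x : Vx) : extremalGraph.degree (φ x) = extremalGraph.degree x := by
  rw [degN_eq, degN_eq, degN_transfer φ hAdj]

lemma lazyWalk_transfer (hAdj : ∀ u v, extremalGraph.Adj (φ u) (φ v) ↔ extremalGraph.Adj u v)
    (α : ℝ) (x v : Vx) :
    lazyWalk extremalGraph α (φ x) (φ v) = lazyWalk extremalGraph α x v := by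
  unfold lazyWalk
  by_cases h : v = x
  · rw [if_pos (congrArg φ h), if_pos h]
  · rw [if_neg (fun hc => h (φ.injective hc)), if_neg h]
    by_cases h2 : extremalGraph.Adj x v
    · rw [if_pos ((hAdj x v).mpr h2), if_pos h2, degree_transfer φ hAdj]
    · rw [if_neg (fun hc => h2 ((hAdj x v).mp hc)), if_neg h2]

lemma dZ_symm_transfer (hAdj : ∀ u v, extremalGraph.Adj (φ u) (φ v) ↔ extremalGraph.Adj u v)
    (u v : Vx) : dZ (φ u) (φ v) = dZ u v := by
  unfold dZ
  by_cases h : u = v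
  · rw [if_pos (congrArg φ h), if_pos h]
  · rw [if_neg (fun hc => h (φ.injective hc)), if_neg h]
    by_cases h2 : extremalGraph.Adj u v
    · rw [if_pos ((hAdj u v).mpr h2), if_pos h2]
    · rw [if_neg (fun hc => h2 ((hAdj u v).mp hc)), if_neg h2]

lemma distR_transfer (hAdj : ∀ u v, extremalGraph.Adj (φ u) (φ v) ↔ extremalGraph.Adj u v)
    (u v : Vx) : ((extremalGraph.dist (φ u) (φ v) : ℕ) : ℝ)
      = ((extremalGraph.dist u v : ℕ) : ℝ) := by
  rw [dist_evalZ, dist_evalZ, dZ_symm_transfer φ hAdj]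

lemma coupling_transfer (m1 m2 : Vx → ℝ) (A : Vx → Vx → ℝ)
    (hA : IsCoupling (fun v => m1 (φ.symm v)) (fun v => m2 (φ.symm v)) A) :
    IsCoupling m1 m2 (fun u v => A (φ u) (φ v)) := by
  obtain ⟨_, hpos, hr, hc⟩ := hA
  refine ⟨Set.toFinite _, fun u v => hpos (φ u) (φ v), ?_, ?_⟩
  · intro u
    rw [finsum_fintype]
    rw [Fintype.sum_equiv φ _ (fun v => A (φ u) v) (fun v => rfl)]
    rw [← finsum_fintype, hr (φ u)]
    simp
  · intro v
    rw [finsum_fintype]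
    rw [Fintype.sum_equiv φ _ (fun u => A u (φ v)) (fun u => rfl)]
    rw [← finsum_fintype, hc (φ v)]
    simp

lemma transport_transfer (hAdj : ∀ u v, extremalGraph.Adj (φ u) (φ v) ↔ extremalGraph.Adj u v)
    (m1 m2 : Vx → ℝ) :
    transportDist extremalGraph (fun v => m1 (φ.symm v)) (fun v => m2 (φ.symm v))
      = transportDist extremalGraph m1 m2 := by
  have hAdj' : ∀ u v, extremalGraph.Adj (φ.symm u) (φ.symm v) ↔ extremalGraph.Adj u v := by
    intro u v
    conv_rhs => rw [← φ.apply_symm_apply u, ← φ.apply_symm_apply v]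
    exact (hAdj _ _).symm
  unfold transportDist
  congr 1
  ext w
  constructor
  · rintro ⟨A, hA, rfl⟩
    refine ⟨fun u v => A (φ u) (φ v), coupling_transfer φ m1 m2 A hA, ?_⟩
    rw [finsum_fintype, finsum_fintype]
    show ∑ p : Vx × Vx, A p.1 p.2 * (extremalGraph.dist p.1 p.2 : ℝ)
        = ∑ p : Vx × Vx, A (φ p.1) (φ p.2) * (extremalGraph.dist p.1 p.2 : ℝ)
    exact (Fintype.sum_equiv (Equiv.prodCongr φ φ)
      (fun p => A (φ p.1) (φ p.2) * (extremalGraph.dist p.1 p.2 : ℝ))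
      (fun q => A q.1 q.2 * (extremalGraph.dist q.1 q.2 : ℝ))
      (fun p => by simp [Equiv.prodCongr_apply, Prod.map, distR_transfer φ hAdj])).symm
  · rintro ⟨A, hA, rfl⟩
    have hA' : IsCoupling (fun v => (fun u => m1 (φ.symm u)) (φ.symm.symm v))
        (fun v => (fun u => m2 (φ.symm u)) (φ.symm.symm v)) A := by
      simpa using hA
    refine ⟨fun u v => A (φ.symm u) (φ.symm v), ?_, ?_⟩
    · have := coupling_transfer φ.symm (fun v => m1 (φ.symm v)) (fun v => m2 (φ.symm v)) A hA'
      simpa using this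
    rw [finsum_fintype, finsum_fintype]
    show ∑ p : Vx × Vx, A p.1 p.2 * (extremalGraph.dist p.1 p.2 : ℝ)
        = ∑ p : Vx × Vx, A (φ.symm p.1) (φ.symm p.2) * (extremalGraph.dist p.1 p.2 : ℝ)
    exact (Fintype.sum_equiv (Equiv.prodCongr φ.symm φ.symm)
      (fun p => A (φ.symm p.1) (φ.symm p.2) * (extremalGraph.dist p.1 p.2 : ℝ))
      (fun q => A q.1 q.2 * (extremalGraph.dist q.1 q.2 : ℝ))
      (fun p => by simp [Equiv.prodCongr_apply, Prod.map, distR_transfer φ.symm hAdj'])).symm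

lemma hasLLY_transfer (hAdj : ∀ u v, extremalGraph.Adj (φ u) (φ v) ↔ extremalGraph.Adj u v)
    (x y : Vx) (κ : ℝ) (h : HasLLYCurv extremalGraph x y κ) :
    HasLLYCurv extremalGraph (φ x) (φ y) κ := by
  unfold HasLLYCurv at h ⊢
  have key : ∀ α : ℝ, alphaRicci extremalGraph α (φ x) (φ y) = alphaRicci extremalGraph α x y := by
    intro α
    unfold alphaRicci
    have hm1 : lazyWalk extremalGraph α (φ x) = fun v => lazyWalk extremalGraph α x (φ.symm v) := by
      funext v
      conv_lhs => rw [← φ.apply_symm_apply v]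
      rw [lazyWalk_transfer φ hAdj]
    have hm2 : lazyWalk extremalGraph α (φ y) = fun v => lazyWalk extremalGraph α y (φ.symm v) := by
      funext v
      conv_lhs => rw [← φ.apply_symm_apply v]
      rw [lazyWalk_transfer φ hAdj]
    rw [hm1, hm2, transport_transfer φ hAdj, distR_transfer φ hAdj]
  simpa only [key] using h

end Transfer

lemma transport_symm (m1 m2 : Vx → ℝ) :
    transportDist extremalGraph m1 m2 = transportDist extremalGraph m2 m1 := by
  unfold transportDist
  congr 1
  ext w
  constructor <;> rintro ⟨A, ⟨hfin, hpos, hr, hc⟩, rfl⟩ <;>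
  · refine ⟨fun u v => A v u, ⟨Set.toFinite _, fun u v => hpos v u, hc, hr⟩, ?_⟩
    rw [finsum_fintype, finsum_fintype]
    show ∑ p : Vx × Vx, A p.1 p.2 * (extremalGraph.dist p.1 p.2 : ℝ)
        = ∑ p : Vx × Vx, A p.2 p.1 * (extremalGraph.dist p.1 p.2 : ℝ)
    exact (Fintype.sum_equiv (Equiv.prodComm Vx Vx)
      (fun p => A p.2 p.1 * (extremalGraph.dist p.1 p.2 : ℝ))
      (fun q => A q.1 q.2 * (extremalGraph.dist q.1 q.2 : ℝ))
      (fun p => by simp only [Equiv.prodComm_apply, Prod.snd_swap, Prod.fst_swap]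
                   rw [SimpleGraph.dist_comm])).symm

lemma hasLLY_symm (x y : Vx) (κ : ℝ) (h : HasLLYCurv extremalGraph x y κ) :
    HasLLYCurv extremalGraph y x κ := by
  unfold HasLLYCurv at h ⊢
  have key : ∀ α : ℝ, alphaRicci extremalGraph α y x = alphaRicci extremalGraph α x y := by
    intro α
    unfold alphaRicci
    rw [transport_symm, SimpleGraph.dist_comm]
  simpa only [key] using h

def rotE : Vx ≃ Vx := Equiv.optionCongr (Equiv.addRight (4 : ZMod 16))
def negE : Vx ≃ Vx := Equiv.optionCongr (Equiv.neg (ZMod 16))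

lemma rotE_adj : ∀ u v, extremalGraph.Adj (rotE u) (rotE v) ↔ extremalGraph.Adj u v := by
  decide

lemma negE_adj : ∀ u v, extremalGraph.Adj (negE u) (negE v) ↔ extremalGraph.Adj u v := by
  decide

def EP (x y : Vx) : Prop := ∃ κ : ℝ, 0 < κ ∧ HasLLYCurv extremalGraph x y κ

lemma EP_rot {x y : Vx} (h : EP x y) : EP (rotE x) (rotE y) := by
  obtain ⟨κ, hκ, hl⟩ := h
  exact ⟨κ, hκ, hasLLY_transfer rotE rotE_adj x y κ hl⟩

lemma EP_neg {x y : Vx} (h : EP x y) : EP (negE x) (negE y) := by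
  obtain ⟨κ, hκ, hl⟩ := h
  exact ⟨κ, hκ, hasLLY_transfer negE negE_adj x y κ hl⟩

lemma EP_symm {x y : Vx} (h : EP x y) : EP y x := by
  obtain ⟨κ, hκ, hl⟩ := h
  exact ⟨κ, hκ, hasLLY_symm x y κ hl⟩

lemma EP_rot' (x y x' y' : Vx) (hx : rotE x = x') (hy : rotE y = y') (h : EP x y) : EP x' y' :=
  hx ▸ hy ▸ EP_rot h

lemma EP_neg' (x y x' y' : Vx) (hx : negE x = x') (hy : negE y = y') (h : EP x y) : EP x' y' :=
  hx ▸ hy ▸ EP_neg h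

def look (L : List (ℕ × ℕ × ℤ)) (u v : Vx) : ℤ :=
  (((L.find? (fun e => e.1 == ι u && e.2.1 == ι v)).map (fun e => e.2.2)).getD 0)
def lookF (L : List ℤ) (v : Vx) : ℤ := L.getD (ι v) 0


def P_r0 : List (ℕ × ℕ × ℤ) := [(0,0,16), (0,1,-16), (1,1,7), (2,2,7), (3,3,7), (4,3,7), (5,5,7), (6,5,7), (7,1,5), (7,5,2), (8,1,4), (8,2,3), (9,13,7), (10,2,6), (10,3,1), (11,3,1), (11,13,2), (11,15,2), (11,16,2), (12,16,7), (13,13,7), (14,15,7), (15,15,7), (16,16,7)]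
def Q_r0 : List (ℕ × ℕ × ℤ) := [(0,0,-16), (0,1,128), (1,1,-7), (2,2,-7), (3,3,-7), (4,3,-7), (5,5,-7), (6,5,-7), (7,1,-5), (7,5,-2), (8,1,-4), (8,2,-3), (9,13,-7), (10,2,-6), (10,3,-1), (11,3,-1), (11,13,-2), (11,15,-2), (11,16,-2), (12,16,-7), (13,13,-7), (14,15,-7), (15,15,-7), (16,16,-7)]
def F_r0 : List ℤ := [1, 0, 0, 0, 1, 1, 2, 2, 2, 2, 2, 2, 2, 1, 1, 0, 0]
lemma edge_r0 : EP none (some 0) :=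
  master none (some 0) 112 34 (look P_r0) (look Q_r0) (lookF F_r0)
    (by decide) (by decide) (by decide) (by decide) (by decide) (by decide)
    (by decide) (by decide) (by decide) (by decide) (by decide) (by decide)
    (by decide) (by decide) (by decide)


def P_r1 : List (ℕ × ℕ × ℤ) := [(0,0,16), (0,1,4), (0,2,-20), (1,1,3), (2,2,3), (3,3,3), (4,3,3), (5,3,3), (6,2,3), (7,2,3), (8,2,3), (9,2,3), (10,2,3), (11,2,2), (11,3,1), (12,3,3), (13,1,3), (14,3,3), (15,1,3), (16,1,3)]
def Q_r1 : List (ℕ × ℕ × ℤ) := [(0,0,-16), (0,1,-4), (0,2,68), (1,1,-3), (2,2,-3), (3,3,-3), (4,3,-3), (5,3,-3), (6,2,-3), (7,2,-3), (8,2,-3), (9,2,-3), (10,2,-3), (11,2,-2), (11,3,-1), (12,3,-3), (13,1,-3), (14,3,-3), (15,1,-3), (16,1,-3)]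
def F_r1 : List ℤ := [1, 0, 0, 0, 1, 1, 2, 2, 2, 2, 2, 2, 2, 1, 2, 1, 1]
lemma edge_r1 : EP none (some 1) :=
  master none (some 1) 48 1 (look P_r1) (look Q_r1) (lookF F_r1)
    (by decide) (by decide) (by decide) (by decide) (by decide) (by decide)
    (by decide) (by decide) (by decide) (by decide) (by decide) (by decide)
    (by decide) (by decide) (by decide)


def P_r2 : List (ℕ × ℕ × ℤ) := [(0,0,16), (0,2,11), (0,3,-27), (1,1,5), (2,2,5), (3,3,5), (4,4,5), (5,5,5), (6,5,5), (7,5,5), (8,3,5), (9,3,4), (9,5,1), (10,3,5), (11,3,5), (12,3,3), (12,4,2), (13,1,5), (14,4,5), (15,1,5), (16,1,1), (16,4,4)]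
def Q_r2 : List (ℕ × ℕ × ℤ) := [(0,0,-16), (0,2,-11), (0,3,107), (1,1,-5), (2,2,-5), (3,3,-5), (4,4,-5), (5,5,-5), (6,5,-5), (7,5,-5), (8,3,-5), (9,3,-4), (9,5,-1), (10,3,-5), (11,3,-5), (12,3,-3), (12,4,-2), (13,1,-5), (14,4,-5), (15,1,-5), (16,1,-1), (16,4,-4)]
def F_r2 : List ℤ := [1, 1, 0, 0, 0, 1, 2, 2, 2, 2, 2, 2, 2, 2, 2, 2, 2]
lemma edge_r2 : EP none (some 2) :=
  master none (some 2) 80 8 (look P_r2) (look Q_r2) (lookF F_r2)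
    (by decide) (by decide) (by decide) (by decide) (by decide) (by decide)
    (by decide) (by decide) (by decide) (by decide) (by decide) (by decide)
    (by decide) (by decide) (by decide)


def P_r3 : List (ℕ × ℕ × ℤ) := [(0,0,3), (1,1,7), (1,2,-7), (2,2,3), (3,3,3), (5,3,3), (13,0,3), (15,0,1), (15,2,2), (16,2,2), (16,3,1)]
def Q_r3 : List (ℕ × ℕ × ℤ) := [(0,0,-3), (1,1,-7), (1,2,28), (2,2,-3), (3,3,-3), (5,3,-3), (13,0,-3), (15,0,-1), (15,2,-2), (16,2,-2), (16,3,-1)]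
def F_r3 : List ℤ := [1, 1, 0, 0, 1, 1, 1, 1, 1, 1, 1, 1, 1, 2, 1, 2, 2]
lemma edge_r3 : EP (some 0) (some 1) :=
  master (some 0) (some 1) 21 11 (look P_r3) (look Q_r3) (lookF F_r3)
    (by decide) (by decide) (by decide) (by decide) (by decide) (by decide)
    (by decide) (by decide) (by decide) (by decide) (by decide) (by decide)
    (by decide) (by decide) (by decide)


def P_r4 : List (ℕ × ℕ × ℤ) := [(0,0,3), (0,4,2), (1,1,3), (1,5,2), (2,2,3), (2,3,-5), (2,4,1), (2,5,1), (3,3,5)]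
def Q_r4 : List (ℕ × ℕ × ℤ) := [(0,0,-3), (0,4,-2), (1,1,-3), (1,5,-2), (2,2,-3), (2,3,20), (2,4,-1), (2,5,-1), (3,3,-5)]
def F_r4 : List ℤ := [1, 1, 2, 1, 0, 0, 1, 1, 1, 1, 1, 1, 1, 1, 1, 1, 1]
lemma edge_r4 : EP (some 1) (some 2) :=
  master (some 1) (some 2) 15 12 (look P_r4) (look Q_r4) (lookF F_r4)
    (by decide) (by decide) (by decide) (by decide) (by decide) (by decide)
    (by decide) (by decide) (by decide) (by decide) (by decide) (by decide)
    (by decide) (by decide) (by decide)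


def P_r5 : List (ℕ × ℕ × ℤ) := [(0,0,5), (1,1,7), (1,2,2), (1,3,-9), (2,2,5), (3,3,5), (5,5,5), (13,0,2), (13,3,3), (15,3,1), (15,4,4), (16,4,3), (16,5,2)]
def Q_r5 : List (ℕ × ℕ × ℤ) := [(0,0,-5), (1,1,-7), (1,2,-2), (1,3,44), (2,2,-5), (3,3,-5), (5,5,-5), (13,0,-2), (13,3,-3), (15,3,-1), (15,4,-4), (16,4,-3), (16,5,-2)]
def F_r5 : List ℤ := [1, 1, 0, 0, 0, 0, 1, 1, 1, 1, 1, 1, 1, 2, 1, 2, 2]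
lemma edge_r5 : EP (some 0) (some 2) :=
  master (some 0) (some 2) 35 14 (look P_r5) (look Q_r5) (lookF F_r5)
    (by decide) (by decide) (by decide) (by decide) (by decide) (by decide)
    (by decide) (by decide) (by decide) (by decide) (by decide) (by decide)
    (by decide) (by decide) (by decide)


def P_r6 : List (ℕ × ℕ × ℤ) := [(0,0,1), (1,1,1), (1,5,-1), (2,4,1), (3,3,1), (5,5,1), (13,9,1), (15,6,1), (16,7,1)]
def Q_r6 : List (ℕ × ℕ × ℤ) := [(0,0,-1), (1,1,-1), (1,5,8), (2,4,-1), (3,3,-1), (5,5,-1), (13,9,-1), (15,6,-1), (16,7,-1)]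
def F_r6 : List ℤ := [1, 1, 2, 1, 0, 0, 0, 0, 1, 0, 1, 1, 1, 1, 1, 2, 2]
lemma edge_r6 : EP (some 0) (some 4) :=
  master (some 0) (some 4) 7 1 (look P_r6) (look Q_r6) (lookF F_r6)
    (by decide) (by decide) (by decide) (by decide) (by decide) (by decide)
    (by decide) (by decide) (by decide) (by decide) (by decide) (by decide)
    (by decide) (by decide) (by decide)

lemma curvature_all : PositivelyCurved extremalGraph := by
  intro x y h
  show EP x y
  rcases x with _ | i <;> rcases y with _ | j
  · exact absurd h (by decide)
  · fin_cases j
    · exact edge_r0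
    · exact edge_r1
    · exact edge_r2
    · exact EP_rot' none (some 15) none (some 3) (by decide) (by decide) (EP_neg' none (some 1) none (some 15) (by decide) (by decide) (edge_r1))
    · exact EP_rot' none (some 0) none (some 4) (by decide) (by decide) (edge_r0)
    · exact EP_rot' none (some 1) none (some 5) (by decide) (by decide) (edge_r1)
    · exact EP_rot' none (some 2) none (some 6) (by decide) (by decide) (edge_r2)
    · exact EP_neg' none (some 9) none (some 7) (by decide) (by decide) (EP_rot' none (some 5) none (some 9) (by decide) (by decide) (EP_rot' none (some 1) none (some 5) (by decide) (by decide) (edge_r1)))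
    · exact EP_rot' none (some 4) none (some 8) (by decide) (by decide) (EP_rot' none (some 0) none (some 4) (by decide) (by decide) (edge_r0))
    · exact EP_rot' none (some 5) none (some 9) (by decide) (by decide) (EP_rot' none (some 1) none (some 5) (by decide) (by decide) (edge_r1))
    · exact EP_rot' none (some 6) none (some 10) (by decide) (by decide) (EP_rot' none (some 2) none (some 6) (by decide) (by decide) (edge_r2))
    · exact EP_neg' none (some 5) none (some 11) (by decide) (by decide) (EP_rot' none (some 1) none (some 5) (by decide) (by decide) (edge_r1))
    · exact EP_neg' none (some 4) none (some 12) (by decide) (by decide) (EP_rot' none (some 0) none (some 4) (by decide) (by decide) (edge_r0))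
    · exact EP_rot' none (some 9) none (some 13) (by decide) (by decide) (EP_rot' none (some 5) none (some 9) (by decide) (by decide) (EP_rot' none (some 1) none (some 5) (by decide) (by decide) (edge_r1)))
    · exact EP_neg' none (some 2) none (some 14) (by decide) (by decide) (edge_r2)
    · exact EP_neg' none (some 1) none (some 15) (by decide) (by decide) (edge_r1)
  · fin_cases i
    · exact EP_symm (edge_r0)
    · exact EP_symm (edge_r1)
    · exact EP_symm (edge_r2)
    · exact EP_symm (EP_rot' none (some 15) none (some 3) (by decide) (by decide) (EP_neg' none (some 1) none (some 15) (by decide) (by decide) (edge_r1)))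
    · exact EP_symm (EP_rot' none (some 0) none (some 4) (by decide) (by decide) (edge_r0))
    · exact EP_symm (EP_rot' none (some 1) none (some 5) (by decide) (by decide) (edge_r1))
    · exact EP_symm (EP_rot' none (some 2) none (some 6) (by decide) (by decide) (edge_r2))
    · exact EP_symm (EP_neg' none (some 9) none (some 7) (by decide) (by decide) (EP_rot' none (some 5) none (some 9) (by decide) (by decide) (EP_rot' none (some 1) none (some 5) (by decide) (by decide) (edge_r1))))
    · exact EP_symm (EP_rot' none (some 4) none (some 8) (by decide) (by decide) (EP_rot' none (some 0) none (some 4) (by decide) (by decide) (edge_r0)))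
    · exact EP_symm (EP_rot' none (some 5) none (some 9) (by decide) (by decide) (EP_rot' none (some 1) none (some 5) (by decide) (by decide) (edge_r1)))
    · exact EP_symm (EP_rot' none (some 6) none (some 10) (by decide) (by decide) (EP_rot' none (some 2) none (some 6) (by decide) (by decide) (edge_r2)))
    · exact EP_symm (EP_neg' none (some 5) none (some 11) (by decide) (by decide) (EP_rot' none (some 1) none (some 5) (by decide) (by decide) (edge_r1)))
    · exact EP_symm (EP_neg' none (some 4) none (some 12) (by decide) (by decide) (EP_rot' none (some 0) none (some 4) (by decide) (by decide) (edge_r0)))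
    · exact EP_symm (EP_rot' none (some 9) none (some 13) (by decide) (by decide) (EP_rot' none (some 5) none (some 9) (by decide) (by decide) (EP_rot' none (some 1) none (some 5) (by decide) (by decide) (edge_r1))))
    · exact EP_symm (EP_neg' none (some 2) none (some 14) (by decide) (by decide) (edge_r2))
    · exact EP_symm (EP_neg' none (some 1) none (some 15) (by decide) (by decide) (edge_r1))
  · fin_cases i <;> fin_cases j
    · exact absurd h (by decide)
    · exact edge_r3
    · exact edge_r5
    · exact absurd h (by decide)
    · exact edge_r6
    · exact absurd h (by decide)
    · exact absurd h (by decide)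
    · exact absurd h (by decide)
    · exact absurd h (by decide)
    · exact absurd h (by decide)
    · exact absurd h (by decide)
    · exact absurd h (by decide)
    · exact EP_neg' (some 0) (some 4) (some 0) (some 12) (by decide) (by decide) (edge_r6)
    · exact absurd h (by decide)
    · exact EP_neg' (some 0) (some 2) (some 0) (some 14) (by decide) (by decide) (edge_r5)
    · exact EP_neg' (some 0) (some 1) (some 0) (some 15) (by decide) (by decide) (edge_r3)
    · exact EP_symm (edge_r3)
    · exact absurd h (by decide)
    · exact edge_r4
    · exact absurd h (by decide)
    · exact absurd h (by decide)
    · exact absurd h (by decide)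
    · exact absurd h (by decide)
    · exact absurd h (by decide)
    · exact absurd h (by decide)
    · exact absurd h (by decide)
    · exact absurd h (by decide)
    · exact absurd h (by decide)
    · exact absurd h (by decide)
    · exact absurd h (by decide)
    · exact absurd h (by decide)
    · exact absurd h (by decide)
    · exact EP_symm (edge_r5)
    · exact EP_symm (edge_r4)
    · exact absurd h (by decide)
    · exact EP_symm (EP_rot' (some 15) (some 14) (some 3) (some 2) (by decide) (by decide) (EP_neg' (some 1) (some 2) (some 15) (some 14) (by decide) (by decide) (edge_r4)))
    · exact EP_symm (EP_rot' (some 0) (some 14) (some 4) (some 2) (by decide) (by decide) (EP_neg' (some 0) (some 2) (some 0) (some 14) (by decide) (by decide) (edge_r5)))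
    · exact absurd h (by decide)
    · exact absurd h (by decide)
    · exact absurd h (by decide)
    · exact absurd h (by decide)
    · exact absurd h (by decide)
    · exact absurd h (by decide)
    · exact absurd h (by decide)
    · exact absurd h (by decide)
    · exact absurd h (by decide)
    · exact absurd h (by decide)
    · exact absurd h (by decide)
    · exact absurd h (by decide)
    · exact absurd h (by decide)
    · exact EP_rot' (some 15) (some 14) (some 3) (some 2) (by decide) (by decide) (EP_neg' (some 1) (some 2) (some 15) (some 14) (by decide) (by decide) (edge_r4))
    · exact absurd h (by decide)
    · exact EP_symm (EP_rot' (some 0) (some 15) (some 4) (some 3) (by decide) (by decide) (EP_neg' (some 0) (some 1) (some 0) (some 15) (by decide) (by decide) (edge_r3)))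
    · exact absurd h (by decide)
    · exact absurd h (by decide)
    · exact absurd h (by decide)
    · exact absurd h (by decide)
    · exact absurd h (by decide)
    · exact absurd h (by decide)
    · exact absurd h (by decide)
    · exact absurd h (by decide)
    · exact absurd h (by decide)
    · exact absurd h (by decide)
    · exact absurd h (by decide)
    · exact EP_symm (edge_r6)
    · exact absurd h (by decide)
    · exact EP_rot' (some 0) (some 14) (some 4) (some 2) (by decide) (by decide) (EP_neg' (some 0) (some 2) (some 0) (some 14) (by decide) (by decide) (edge_r5))
    · exact EP_rot' (some 0) (some 15) (some 4) (some 3) (by decide) (by decide) (EP_neg' (some 0) (some 1) (some 0) (some 15) (by decide) (by decide) (edge_r3))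
    · exact absurd h (by decide)
    · exact EP_rot' (some 0) (some 1) (some 4) (some 5) (by decide) (by decide) (edge_r3)
    · exact EP_rot' (some 0) (some 2) (some 4) (some 6) (by decide) (by decide) (edge_r5)
    · exact absurd h (by decide)
    · exact EP_rot' (some 0) (some 4) (some 4) (some 8) (by decide) (by decide) (edge_r6)
    · exact absurd h (by decide)
    · exact absurd h (by decide)
    · exact absurd h (by decide)
    · exact absurd h (by decide)
    · exact absurd h (by decide)
    · exact absurd h (by decide)
    · exact absurd h (by decide)
    · exact absurd h (by decide)
    · exact absurd h (by decide)
    · exact absurd h (by decide)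
    · exact absurd h (by decide)
    · exact EP_symm (EP_rot' (some 0) (some 1) (some 4) (some 5) (by decide) (by decide) (edge_r3))
    · exact absurd h (by decide)
    · exact EP_rot' (some 1) (some 2) (some 5) (some 6) (by decide) (by decide) (edge_r4)
    · exact absurd h (by decide)
    · exact absurd h (by decide)
    · exact absurd h (by decide)
    · exact absurd h (by decide)
    · exact absurd h (by decide)
    · exact absurd h (by decide)
    · exact absurd h (by decide)
    · exact absurd h (by decide)
    · exact absurd h (by decide)
    · exact absurd h (by decide)
    · exact absurd h (by decide)
    · exact absurd h (by decide)
    · exact absurd h (by decide)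
    · exact EP_symm (EP_rot' (some 0) (some 2) (some 4) (some 6) (by decide) (by decide) (edge_r5))
    · exact EP_symm (EP_rot' (some 1) (some 2) (some 5) (some 6) (by decide) (by decide) (edge_r4))
    · exact absurd h (by decide)
    · exact EP_symm (EP_neg' (some 9) (some 10) (some 7) (some 6) (by decide) (by decide) (EP_rot' (some 5) (some 6) (some 9) (some 10) (by decide) (by decide) (EP_rot' (some 1) (some 2) (some 5) (some 6) (by decide) (by decide) (edge_r4))))
    · exact EP_symm (EP_neg' (some 8) (some 10) (some 8) (some 6) (by decide) (by decide) (EP_rot' (some 4) (some 6) (some 8) (some 10) (by decide) (by decide) (EP_rot' (some 0) (some 2) (some 4) (some 6) (by decide) (by decide) (edge_r5))))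
    · exact absurd h (by decide)
    · exact absurd h (by decide)
    · exact absurd h (by decide)
    · exact absurd h (by decide)
    · exact absurd h (by decide)
    · exact absurd h (by decide)
    · exact absurd h (by decide)
    · exact absurd h (by decide)
    · exact absurd h (by decide)
    · exact absurd h (by decide)
    · exact absurd h (by decide)
    · exact absurd h (by decide)
    · exact absurd h (by decide)
    · exact EP_neg' (some 9) (some 10) (some 7) (some 6) (by decide) (by decide) (EP_rot' (some 5) (some 6) (some 9) (some 10) (by decide) (by decide) (EP_rot' (some 1) (some 2) (some 5) (some 6) (by decide) (by decide) (edge_r4)))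
    · exact absurd h (by decide)
    · exact EP_symm (EP_neg' (some 8) (some 9) (some 8) (some 7) (by decide) (by decide) (EP_rot' (some 4) (some 5) (some 8) (some 9) (by decide) (by decide) (EP_rot' (some 0) (some 1) (some 4) (some 5) (by decide) (by decide) (edge_r3))))
    · exact absurd h (by decide)
    · exact absurd h (by decide)
    · exact absurd h (by decide)
    · exact absurd h (by decide)
    · exact absurd h (by decide)
    · exact absurd h (by decide)
    · exact absurd h (by decide)
    · exact absurd h (by decide)
    · exact absurd h (by decide)
    · exact absurd h (by decide)
    · exact absurd h (by decide)
    · exact EP_symm (EP_rot' (some 0) (some 4) (some 4) (some 8) (by decide) (by decide) (edge_r6))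
    · exact absurd h (by decide)
    · exact EP_neg' (some 8) (some 10) (some 8) (some 6) (by decide) (by decide) (EP_rot' (some 4) (some 6) (some 8) (some 10) (by decide) (by decide) (EP_rot' (some 0) (some 2) (some 4) (some 6) (by decide) (by decide) (edge_r5)))
    · exact EP_neg' (some 8) (some 9) (some 8) (some 7) (by decide) (by decide) (EP_rot' (some 4) (some 5) (some 8) (some 9) (by decide) (by decide) (EP_rot' (some 0) (some 1) (some 4) (some 5) (by decide) (by decide) (edge_r3)))
    · exact absurd h (by decide)
    · exact EP_rot' (some 4) (some 5) (some 8) (some 9) (by decide) (by decide) (EP_rot' (some 0) (some 1) (some 4) (some 5) (by decide) (by decide) (edge_r3))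
    · exact EP_rot' (some 4) (some 6) (some 8) (some 10) (by decide) (by decide) (EP_rot' (some 0) (some 2) (some 4) (some 6) (by decide) (by decide) (edge_r5))
    · exact absurd h (by decide)
    · exact EP_rot' (some 4) (some 8) (some 8) (some 12) (by decide) (by decide) (EP_rot' (some 0) (some 4) (some 4) (some 8) (by decide) (by decide) (edge_r6))
    · exact absurd h (by decide)
    · exact absurd h (by decide)
    · exact absurd h (by decide)
    · exact absurd h (by decide)
    · exact absurd h (by decide)
    · exact absurd h (by decide)
    · exact absurd h (by decide)
    · exact absurd h (by decide)
    · exact absurd h (by decide)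
    · exact absurd h (by decide)
    · exact absurd h (by decide)
    · exact EP_symm (EP_rot' (some 4) (some 5) (some 8) (some 9) (by decide) (by decide) (EP_rot' (some 0) (some 1) (some 4) (some 5) (by decide) (by decide) (edge_r3)))
    · exact absurd h (by decide)
    · exact EP_rot' (some 5) (some 6) (some 9) (some 10) (by decide) (by decide) (EP_rot' (some 1) (some 2) (some 5) (some 6) (by decide) (by decide) (edge_r4))
    · exact absurd h (by decide)
    · exact absurd h (by decide)
    · exact absurd h (by decide)
    · exact absurd h (by decide)
    · exact absurd h (by decide)
    · exact absurd h (by decide)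
    · exact absurd h (by decide)
    · exact absurd h (by decide)
    · exact absurd h (by decide)
    · exact absurd h (by decide)
    · exact absurd h (by decide)
    · exact absurd h (by decide)
    · exact absurd h (by decide)
    · exact EP_symm (EP_rot' (some 4) (some 6) (some 8) (some 10) (by decide) (by decide) (EP_rot' (some 0) (some 2) (some 4) (some 6) (by decide) (by decide) (edge_r5)))
    · exact EP_symm (EP_rot' (some 5) (some 6) (some 9) (some 10) (by decide) (by decide) (EP_rot' (some 1) (some 2) (some 5) (some 6) (by decide) (by decide) (edge_r4)))
    · exact absurd h (by decide)
    · exact EP_symm (EP_neg' (some 5) (some 6) (some 11) (some 10) (by decide) (by decide) (EP_rot' (some 1) (some 2) (some 5) (some 6) (by decide) (by decide) (edge_r4)))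
    · exact EP_symm (EP_neg' (some 4) (some 6) (some 12) (some 10) (by decide) (by decide) (EP_rot' (some 0) (some 2) (some 4) (some 6) (by decide) (by decide) (edge_r5)))
    · exact absurd h (by decide)
    · exact absurd h (by decide)
    · exact absurd h (by decide)
    · exact absurd h (by decide)
    · exact absurd h (by decide)
    · exact absurd h (by decide)
    · exact absurd h (by decide)
    · exact absurd h (by decide)
    · exact absurd h (by decide)
    · exact absurd h (by decide)
    · exact absurd h (by decide)
    · exact absurd h (by decide)
    · exact absurd h (by decide)
    · exact EP_neg' (some 5) (some 6) (some 11) (some 10) (by decide) (by decide) (EP_rot' (some 1) (some 2) (some 5) (some 6) (by decide) (by decide) (edge_r4))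
    · exact absurd h (by decide)
    · exact EP_symm (EP_neg' (some 4) (some 5) (some 12) (some 11) (by decide) (by decide) (EP_rot' (some 0) (some 1) (some 4) (some 5) (by decide) (by decide) (edge_r3)))
    · exact absurd h (by decide)
    · exact absurd h (by decide)
    · exact absurd h (by decide)
    · exact EP_symm (EP_neg' (some 0) (some 4) (some 0) (some 12) (by decide) (by decide) (edge_r6))
    · exact absurd h (by decide)
    · exact absurd h (by decide)
    · exact absurd h (by decide)
    · exact absurd h (by decide)
    · exact absurd h (by decide)
    · exact absurd h (by decide)
    · exact absurd h (by decide)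
    · exact EP_neg' (some 4) (some 8) (some 12) (some 8) (by decide) (by decide) (EP_rot' (some 0) (some 4) (some 4) (some 8) (by decide) (by decide) (edge_r6))
    · exact absurd h (by decide)
    · exact EP_neg' (some 4) (some 6) (some 12) (some 10) (by decide) (by decide) (EP_rot' (some 0) (some 2) (some 4) (some 6) (by decide) (by decide) (edge_r5))
    · exact EP_neg' (some 4) (some 5) (some 12) (some 11) (by decide) (by decide) (EP_rot' (some 0) (some 1) (some 4) (some 5) (by decide) (by decide) (edge_r3))
    · exact absurd h (by decide)
    · exact EP_rot' (some 8) (some 9) (some 12) (some 13) (by decide) (by decide) (EP_rot' (some 4) (some 5) (some 8) (some 9) (by decide) (by decide) (EP_rot' (some 0) (some 1) (some 4) (some 5) (by decide) (by decide) (edge_r3)))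
    · exact EP_rot' (some 8) (some 10) (some 12) (some 14) (by decide) (by decide) (EP_rot' (some 4) (some 6) (some 8) (some 10) (by decide) (by decide) (EP_rot' (some 0) (some 2) (some 4) (some 6) (by decide) (by decide) (edge_r5)))
    · exact absurd h (by decide)
    · exact absurd h (by decide)
    · exact absurd h (by decide)
    · exact absurd h (by decide)
    · exact absurd h (by decide)
    · exact absurd h (by decide)
    · exact absurd h (by decide)
    · exact absurd h (by decide)
    · exact absurd h (by decide)
    · exact absurd h (by decide)
    · exact absurd h (by decide)
    · exact absurd h (by decide)
    · exact absurd h (by decide)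
    · exact EP_symm (EP_rot' (some 8) (some 9) (some 12) (some 13) (by decide) (by decide) (EP_rot' (some 4) (some 5) (some 8) (some 9) (by decide) (by decide) (EP_rot' (some 0) (some 1) (some 4) (some 5) (by decide) (by decide) (edge_r3))))
    · exact absurd h (by decide)
    · exact EP_rot' (some 9) (some 10) (some 13) (some 14) (by decide) (by decide) (EP_rot' (some 5) (some 6) (some 9) (some 10) (by decide) (by decide) (EP_rot' (some 1) (some 2) (some 5) (some 6) (by decide) (by decide) (edge_r4)))
    · exact absurd h (by decide)
    · exact EP_symm (EP_neg' (some 0) (some 2) (some 0) (some 14) (by decide) (by decide) (edge_r5))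
    · exact absurd h (by decide)
    · exact absurd h (by decide)
    · exact absurd h (by decide)
    · exact absurd h (by decide)
    · exact absurd h (by decide)
    · exact absurd h (by decide)
    · exact absurd h (by decide)
    · exact absurd h (by decide)
    · exact absurd h (by decide)
    · exact absurd h (by decide)
    · exact absurd h (by decide)
    · exact EP_symm (EP_rot' (some 8) (some 10) (some 12) (some 14) (by decide) (by decide) (EP_rot' (some 4) (some 6) (some 8) (some 10) (by decide) (by decide) (EP_rot' (some 0) (some 2) (some 4) (some 6) (by decide) (by decide) (edge_r5))))
    · exact EP_symm (EP_rot' (some 9) (some 10) (some 13) (some 14) (by decide) (by decide) (EP_rot' (some 5) (some 6) (some 9) (some 10) (by decide) (by decide) (EP_rot' (some 1) (some 2) (some 5) (some 6) (by decide) (by decide) (edge_r4))))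
    · exact absurd h (by decide)
    · exact EP_symm (EP_neg' (some 1) (some 2) (some 15) (some 14) (by decide) (by decide) (edge_r4))
    · exact EP_symm (EP_neg' (some 0) (some 1) (some 0) (some 15) (by decide) (by decide) (edge_r3))
    · exact absurd h (by decide)
    · exact absurd h (by decide)
    · exact absurd h (by decide)
    · exact absurd h (by decide)
    · exact absurd h (by decide)
    · exact absurd h (by decide)
    · exact absurd h (by decide)
    · exact absurd h (by decide)
    · exact absurd h (by decide)
    · exact absurd h (by decide)
    · exact absurd h (by decide)
    · exact absurd h (by decide)
    · exact absurd h (by decide)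
    · exact EP_neg' (some 1) (some 2) (some 15) (some 14) (by decide) (by decide) (edge_r4)
    · exact absurd h (by decide)


-- ===== planarity =====
noncomputable def segm (p q : ℝ × ℝ) : Set.Icc (0:ℝ) 1 → ℝ × ℝ :=
  fun t => ((1 - (t:ℝ)) * p.1 + (t:ℝ) * q.1, (1 - (t:ℝ)) * p.2 + (t:ℝ) * q.2)

lemma segm_cont (p q : ℝ × ℝ) : Continuous (segm p q) := by
  have hc : Continuous fun t : Set.Icc (0:ℝ) 1 => (t:ℝ) := continuous_subtype_val
  unfold segm
  exact Continuous.prodMk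
    (((continuous_const.sub hc).mul continuous_const).add (hc.mul continuous_const))
    (((continuous_const.sub hc).mul continuous_const).add (hc.mul continuous_const))

lemma segm_inj {p q : ℝ × ℝ} (hpq : p ≠ q) : Function.Injective (segm p q) := by
  intro t1 t2 h
  have h1 : ((t1:ℝ) - (t2:ℝ)) * (q.1 - p.1) = 0 := by
    have := congrArg Prod.fst h
    simp only [segm] at this
    nlinarith [this]
  have h2 : ((t1:ℝ) - (t2:ℝ)) * (q.2 - p.2) = 0 := by
    have := congrArg Prod.snd h
    simp only [segm] at this
    nlinarith [this]
  have : (t1:ℝ) = (t2:ℝ) := by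
    by_cases hq1 : q.1 = p.1
    · have hq2 : q.2 ≠ p.2 := by
        intro hc
        exact hpq (Prod.ext hq1.symm hc.symm)
      rcases mul_eq_zero.mp h2 with h | h
      · linarith
      · exact absurd (by linarith : q.2 = p.2) hq2
    · rcases mul_eq_zero.mp h1 with h | h
      · linarith
      · exact absurd (by linarith : q.1 = p.1) hq1
  exact Subtype.ext this

lemma segm_zero (p q : ℝ × ℝ) : segm p q ⟨0, Set.left_mem_Icc.mpr zero_le_one⟩ = p := by
  simp [segm]

lemma segm_one (p q : ℝ × ℝ) : segm p q ⟨1, Set.right_mem_Icc.mpr zero_le_one⟩ = q := by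
  simp [segm]

lemma segm_range_comm (p q : ℝ × ℝ) : Set.range (segm p q) = Set.range (segm q p) := by
  have key : ∀ p q : ℝ × ℝ, Set.range (segm p q) ⊆ Set.range (segm q p) := by
    rintro p q x ⟨t, rfl⟩
    have ht0 : (0:ℝ) ≤ 1 - (t:ℝ) := by linarith [t.2.2]
    have ht1 : (1:ℝ) - (t:ℝ) ≤ 1 := by linarith [t.2.1]
    refine ⟨⟨1 - (t:ℝ), ht0, ht1⟩, ?_⟩
    simp only [segm]
    exact Prod.ext (by norm_num; ring) (by norm_num; ring)
  exact le_antisymm (key p q) (key q p)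

lemma segm_avoid {p q w : ℝ × ℝ} {a b c : ℝ}
    (h1 : a * p.1 + b * p.2 ≤ c) (h2 : a * q.1 + b * q.2 ≤ c)
    (h3 : c < a * w.1 + b * w.2) : w ∉ Set.range (segm p q) := by
  rintro ⟨t, ht⟩
  have hx : (1 - (t:ℝ)) * p.1 + (t:ℝ) * q.1 = w.1 := congrArg Prod.fst ht
  have hy : (1 - (t:ℝ)) * p.2 + (t:ℝ) * q.2 = w.2 := congrArg Prod.snd ht
  have ht0 : (0:ℝ) ≤ (t:ℝ) := t.2.1
  have ht1 : (t:ℝ) ≤ 1 := t.2.2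
  have e : a * w.1 + b * w.2
      = (1 - (t:ℝ)) * (a * p.1 + b * p.2) + (t:ℝ) * (a * q.1 + b * q.2) := by
    linear_combination (-a) * hx + (-b) * hy
  nlinarith [mul_nonneg (by linarith : (0:ℝ) ≤ 1 - (t:ℝ)) (by linarith : 0 ≤ c - (a * p.1 + b * p.2)),
    mul_nonneg ht0 (by linarith : 0 ≤ c - (a * q.1 + b * q.2))]

lemma segm_disj {p q r s : ℝ × ℝ} {a b c : ℝ}
    (h1 : a * p.1 + b * p.2 ≤ c) (h2 : a * q.1 + b * q.2 ≤ c)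
    (h3 : c < a * r.1 + b * r.2) (h4 : c < a * s.1 + b * s.2) :
    ∀ x, x ∈ Set.range (segm p q) → x ∈ Set.range (segm r s) → False := by
  rintro x ⟨t, rfl⟩ hx
  refine segm_avoid h1 h2 ?_ ⟨t, rfl⟩
  obtain ⟨u, hu⟩ := hx
  have hx1 : (1 - (u:ℝ)) * r.1 + (u:ℝ) * s.1 = (segm p q t).1 := congrArg Prod.fst hu
  have hx2 : (1 - (u:ℝ)) * r.2 + (u:ℝ) * s.2 = (segm p q t).2 := congrArg Prod.snd hu
  have hu0 : (0:ℝ) ≤ (u:ℝ) := u.2.1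
  have hu1 : (u:ℝ) ≤ 1 := u.2.2
  have e : a * (segm p q t).1 + b * (segm p q t).2
      = (1 - (u:ℝ)) * (a * r.1 + b * r.2) + (u:ℝ) * (a * s.1 + b * s.2) := by
    linear_combination (-a) * hx1 + (-b) * hx2
  nlinarith [mul_nonneg (by linarith : (0:ℝ) ≤ 1 - (u:ℝ)) (by linarith : 0 ≤ (a * r.1 + b * r.2) - c),
    mul_nonneg hu0 (by linarith : 0 ≤ (a * s.1 + b * s.2) - c)]

lemma segm_shared {s0 p p' : ℝ × ℝ}
    (hcross : (p.1 - s0.1) * (p'.2 - s0.2) - (p.2 - s0.2) * (p'.1 - s0.1) ≠ 0) :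
    Set.range (segm s0 p) ∩ Set.range (segm s0 p') ⊆ {s0} := by
  rintro x ⟨⟨t, ht⟩, ⟨u, hu⟩⟩
  have e1 : (t:ℝ) * (p.1 - s0.1) - (u:ℝ) * (p'.1 - s0.1) = 0 := by
    have a1 : (1 - (t:ℝ)) * s0.1 + (t:ℝ) * p.1 = x.1 := congrArg Prod.fst ht
    have a2 : (1 - (u:ℝ)) * s0.1 + (u:ℝ) * p'.1 = x.1 := congrArg Prod.fst hu
    linear_combination a1 - a2
  have e2 : (t:ℝ) * (p.2 - s0.2) - (u:ℝ) * (p'.2 - s0.2) = 0 := by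
    have a1 : (1 - (t:ℝ)) * s0.2 + (t:ℝ) * p.2 = x.2 := congrArg Prod.snd ht
    have a2 : (1 - (u:ℝ)) * s0.2 + (u:ℝ) * p'.2 = x.2 := congrArg Prod.snd hu
    linear_combination a1 - a2
  have e3 : (u:ℝ) * ((p.1 - s0.1) * (p'.2 - s0.2) - (p.2 - s0.2) * (p'.1 - s0.1)) = 0 := by
    linear_combination (p.2 - s0.2) * e1 - (p.1 - s0.1) * e2
  have hu0 : (u:ℝ) = 0 := by
    rcases mul_eq_zero.mp e3 with h | h
    · exact h
    · exact absurd h hcross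
  have hx1 : x.1 = s0.1 := by
    have a2 : (1 - (u:ℝ)) * s0.1 + (u:ℝ) * p'.1 = x.1 := congrArg Prod.fst hu
    rw [hu0] at a2
    simpa using a2.symm
  have hx2 : x.2 = s0.2 := by
    have a2 : (1 - (u:ℝ)) * s0.2 + (u:ℝ) * p'.2 = x.2 := congrArg Prod.snd hu
    rw [hu0] at a2
    simpa using a2.symm
  exact Set.mem_singleton_iff.mpr (Prod.ext hx1 hx2)

def PT : List (ℤ × ℤ) := [(0, 0), (100, 0), (51, 22), (45, 48), (19, 53), (-5, 100), (-25, 50), (-50, 43), (-53, 17), (-99, -10), (-49, -27), (-40, -52), (-14, -54), (16, -99), (30, -47), (54, -37), (55, -11)]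
def gZ (v : Vx) : ℤ × ℤ := PT.getD (ι v) (0, 0)
noncomputable def fR (v : Vx) : ℝ × ℝ := (((gZ v).1 : ℝ), ((gZ v).2 : ℝ))
def EI : List (ℕ × ℕ) := [(0, 1), (0, 2), (0, 3), (0, 4), (0, 5), (0, 6), (0, 7), (0, 8), (0, 9), (0, 10), (0, 11), (0, 12), (0, 13), (0, 14), (0, 15), (0, 16), (1, 2), (1, 3), (1, 5), (1, 13), (1, 15), (1, 16), (2, 3), (3, 4), (3, 5), (4, 5), (5, 6), (5, 7), (5, 9), (6, 7), (7, 8), (7, 9), (8, 9), (9, 10), (9, 11), (9, 13), (10, 11), (11, 12), (11, 13), (12, 13), (13, 14), (13, 15), (14, 15), (15, 16)]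
def eidx (u v : Vx) : ℕ :=
  (EI.findIdx? (fun e => (e.1 == ι u && e.2 == ι v) || (e.1 == ι v && e.2 == ι u))).getD 100
def VCr0 : List (ℤ × ℤ × ℤ) := [(0, 0, 0), (0, 0, 0), (0, 22, 242), (0, 48, 1152), (0, 106, 2809), (-10, 200, 10025), (-50, 100, 3125), (-100, 86, 4349), (-53, 17, 1549), (-198, -20, 9901), (-49, -27, 1565), (-40, -52, 2152), (-14, -54, 1556), (0, -198, 9801), (0, -94, 2209), (0, -74, 1369), (0, -22, 121)]
def VCr1 : List (ℤ × ℤ × ℤ) := [(0, 0, 0), (98, -44, 6915), (0, 0, 0), (-6, 26, 622), (-20108, 46614, 1044245), (-22924, 53142, 2714410), (-50, 100, 3125), (-100, 86, 4349), (-53, 17, 1549), (-198, -20, 9901), (-49, -27, 1565), (-40, -52, 2152), (-14, -54, 1556), (32, -198, 10057), (134508, -311814, 9345249), (27060, -62730, 1891125), (77924, -180642, 3136441)]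
def VCr2 : List (ℤ × ℤ × ℤ) := [(0, 0, 0), (110, -96, 5671), (7776, -7290, 118098), (0, 0, 0), (-15712, 14730, 241081), (-50, 52, 2848), (-18400, 17250, 661250), (-100, 86, 4349), (-53, 17, 1549), (-198, -20, 9901), (-49, -27, 1565), (-40, -52, 2152), (-14, -54, 1556), (32, -198, 10057), (60, -94, 3109), (45408, -42570, 2013561), (33440, -31350, 1092025)]
def VCr3 : List (ℤ × ℤ × ℤ) := [(0, 0, 0), (28090, -10070, 1404500), (48442, -17366, 1044245), (52, -10, 1159), (0, 0, 0), (-48, 94, 6855), (-48230, 17290, 1035125), (-367502, 131746, 12020089), (-53, 17, 1549), (-198, -20, 9901), (-49, -27, 1565), (-40, -52, 2152), (-14, -54, 1556), (32, -198, 10057), (60, -94, 3109), (108, -74, 4285), (82786, -29678, 2439844)]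
def VCr4 : List (ℤ × ℤ × ℤ) := [(0, 0, 0), (100, 0, 5000), (20840, 1042, 542882), (18960, 948, 449352), (17320, 866, 187489), (0, 0, 0), (-9000, -450, 101250), (-38280, -1914, 915849), (-41720, -2086, 1087849), (-198, -20, 9901), (-49, -27, 1565), (-40, -52, 2152), (-14, -54, 1556), (32, -198, 10057), (60, -94, 3109), (108, -74, 4285), (55, -11, 1573)]
def VCr5 : List (ℤ × ℤ × ℤ) := [(0, 0, 0), (100, 0, 5000), (102, 44, 3085), (276, 138, 9522), (364, 182, 8281), (20, 50, 3450), (0, 0, 0), (-25, -7, 612), (-356, -178, 7921), (-416, -208, 21632), (-49, -27, 1565), (-40, -52, 2152), (-14, -54, 1556), (32, -198, 10057), (60, -94, 3109), (108, -74, 4285), (55, -11, 1573)]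
def VCr6 : List (ℤ × ℤ × ℤ) := [(0, 0, 0), (100, 0, 5000), (102, 44, 3085), (90, 96, 4329), (298162, 346700, 12020089), (45, 57, 2838), (122550, 142500, 2030625), (0, 0, 0), (-122894, -142900, 2042041), (-49, -53, 2776), (-297302, -345700, 11950849), (-40, -52, 2152), (-14, -54, 1556), (32, -198, 10057), (60, -94, 3109), (108, -74, 4285), (55, -11, 1573)]
def VCr7 : List (ℤ × ℤ × ℤ) := [(0, 0, 0), (100, 0, 5000), (102, 44, 3085), (90, 96, 4329), (19, 53, 1585), (177310, 552790, 27196225), (75650, 235850, 4950625), (6, 52, 1251), (0, 0, 0), (-92, -54, 6803), (-19244, -59996, 1281424), (-29206, -91054, 2951524), (-14, -54, 1556), (32, -198, 10057), (60, -94, 3109), (108, -74, 4285), (55, -11, 1573)]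
def VCr8 : List (ℤ × ℤ × ℤ) := [(0, 0, 0), (100, 0, 5000), (102, 44, 3085), (90, 96, 4329), (19, 53, 1585), (-10, 200, 10025), (-52000, 514800, 13520000), (-95140, 941886, 22629049), (-44260, 438174, 4897369), (0, 0, 0), (43660, -432234, 4765489), (47480, -470052, 11271752), (52060, -515394, 13551218), (32, -198, 10057), (60, -94, 3109), (108, -74, 4285), (55, -11, 1573)]
def VCr9 : List (ℤ × ℤ × ℤ) := [(0, 0, 0), (100, 0, 5000), (102, 44, 3085), (90, 96, 4329), (19, 53, 1585), (-10, 200, 10025), (-50, 100, 3125), (-186678, 338786, 11950849), (-30564, 55468, 1281424), (-100, 34, 6771), (0, 0, 0), (9, -25, 587), (30618, -55566, 1285956), (285282, -517734, 27910089), (60, -94, 3109), (108, -74, 4285), (55, -11, 1573)]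
def VCr10 : List (ℤ × ℤ × ℤ) := [(0, 0, 0), (100, 0, 5000), (102, 44, 3085), (90, 96, 4329), (19, 53, 1585), (-10, 200, 10025), (-50, 100, 3125), (-100, 86, 4349), (-22334, 17180, 737881), (-118, 84, 5597), (-9542, 7340, 134689), (0, 0, 0), (4654, -3580, 64082), (112, -94, 5753), (11180, -8600, 369800), (108, -74, 4285), (55, -11, 1573)]
def VCr11 : List (ℤ × ℤ × ℤ) := [(0, 0, 0), (100, 0, 5000), (102, 44, 3085), (90, 96, 4329), (19, 53, 1585), (-10, 200, 10025), (-50, 100, 3125), (-100, 86, 4349), (-53, 17, 1549), (-140562, 36442, 6775609), (-15309, 3969, 321489), (-26, 2, 596), (0, 0, 0), (60, -90, 6945), (61506, -15946, 1297321), (92718, -24038, 2948089), (55, -11, 1573)]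
def VCr12 : List (ℤ × ℤ × ℤ) := [(0, 0, 0), (980100, 158400, 49005000), (102, 44, 3085), (90, 96, 4329), (19, 53, 1585), (-10, 200, 10025), (-50, 100, 3125), (-100, 86, 4349), (-53, 17, 1549), (-198, -20, 9901), (-1046034, -169056, 27910089), (-474408, -76672, 11481632), (-222750, -36000, 2531250), (0, 0, 0), (219582, 35488, 2459762), (470646, 76064, 11300258), (1043262, 168608, 27762361)]
def VCr13 : List (ℤ × ℤ × ℤ) := [(0, 0, 0), (220900, 141000, 11045000), (287358, 183420, 9345249), (90, 96, 4329), (19, 53, 1585), (-10, 200, 10025), (-50, 100, 3125), (-100, 86, 4349), (-53, 17, 1549), (-198, -20, 9901), (-49, -27, 1565), (-161680, -103200, 5916800), (-107066, -68340, 2594642), (-14, -52, 3474), (0, 0, 0), (24, 10, 588), (211970, 135300, 5085025)]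
def VCr14 : List (ℤ × ℤ × ℤ) := [(0, 0, 0), (92, 74, 5715), (45510, 66420, 1891125), (315018, 459756, 18122049), (19, 53, 1585), (-10, 200, 10025), (-50, 100, 3125), (-100, 86, 4349), (-53, 17, 1549), (-198, -20, 9901), (-49, -27, 1565), (-40, -52, 2152), (-127058, -185436, 5896178), (-38, -62, 2886), (-52836, -77112, 1019592), (0, 0, 0), (106634, 155628, 2076481)]
def VCr15 : List (ℤ × ℤ × ℤ) := [(0, 0, 0), (45, 11, 3427), (322, 1610, 25921), (570, 2850, 81225), (142, 710, 20164), (-10, 200, 10025), (-50, 100, 3125), (-100, 86, 4349), (-53, 17, 1549), (-198, -20, 9901), (-49, -27, 1565), (-40, -52, 2152), (-14, -54, 1556), (-958, -4790, 229441), (-410, -2050, 42025), (-2, -52, 1139), (0, 0, 0)]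
def VCr16 : List (ℤ × ℤ × ℤ) := [(-102, -44, -3085), (0, 0, 0), (0, 0, 0), (-6, 26, 622), (-64, 62, 85), (-56, 78, 3470), (-76, 28, 20), (-101, 21, 632), (-208, -10, 13), (-150, -32, 3408), (-200, -98, 45), (-182, -148, 1219), (-130, -152, 27), (-294756, -656502, 15401001), (-169092, -376614, -2140551), (-24860, -55370, -889875), (-67276, -149842, -4389759)]
def VCr17 : List (ℤ × ℤ × ℤ) := [(-90, -96, -4329), (0, 0, 0), (-54816, -62810, -4829518), (0, 0, 0), (-52, 10, -1159), (-50, 52, 2848), (-70, 2, -602), (-95, -5, 10), (-196, -62, -1231), (-144, -58, 2786), (-188, -150, -1199), (-459840, -526900, -95800), (-405216, -464310, -4887918), (-168, -198, 57), (-570720, -653950, -21728975), (-407328, -466730, -22729751), (-265440, -304150, -18898775)]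
def VCr18 : List (ℤ × ℤ × ℤ) := [(-40000, -42000, -2000000), (0, 0, 0), (-10360, -10878, -901838), (-1840, -1932, -179768), (-20280, -21294, -1770951), (0, 0, 0), (-1000, -1050, -63750), (-83880, -88074, -3990591), (-108120, -113526, -3505791), (-83800, -87990, 398050), (-141880, -148974, -1606791), (-77840, -81732, -210168), (-68280, -71694, -1000302), (-168, -198, 57), (-95480, -100254, -3850231), (-67880, -71274, -3908191), (-1560, -1638, -111891)]
def VCr19 : List (ℤ × ℤ × ℤ) := [(-108900, 92400, -5445000), (0, 0, 0), (-147378, 125048, -9751511), (-110, 96, -5671), (-274362, 232792, -10155551), (-210, 200, 25), (-364650, 309400, -5939375), (-203082, 172312, -1372342), (-364650, 309400, -5939375), (-115, 89, -78), (-274626, 233016, -10148679), (-112, 94, -5753), (-74250, 63000, -4893750), (0, 0, 0), (-32802, 27832, -2786182), (-15906, 13496, -1474438), (-77682, 65912, -6382871)]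
def VCr20 : List (ℤ × ℤ × ℤ) := [(-108, 74, -4285), (0, 0, 0), (-41810, 51980, -2584875), (-313982, 390356, -13395151), (-80438, 100004, -2135955), (-125578, 156124, 1841245), (-79, 87, -580), (-104, 80, 32), (-214, 108, -1187), (-153, 27, 2808), (-206, 20, -1155), (-188, -30, 19), (-136, -34, -1173), (-38, -62, 2886), (-24, -10, -588), (0, 0, 0), (-85766, 106628, -7233319)]
def VCr21 : List (ℤ × ℤ × ℤ) := [(-55, 11, -1573), (0, 0, 0), (-33638, 137610, -1025959), (-60830, 248850, 1562225), (-36, 64, 12), (-120, 222, 6879), (-160, 122, -21), (-210, 108, 1203), (-108, 28, -24), (-308, 2, 6755), (-104, -16, -8), (-95, -41, 579), (-69, -43, -17), (-78, -176, 6911), (-50, -72, -37), (-2, -52, 1139), (0, 0, 0)]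
def VCr22 : List (ℤ × ℤ × ℤ) := [(-102, -44, -3085), (98, -44, 6915), (0, 0, 0), (0, 0, 0), (-52, 10, -1159), (-50, 52, 2848), (-70, 2, -602), (-95, -5, 10), (-35542, -8202, -124397), (-13299, -3069, 300762), (-200, -98, 45), (-182, -148, 1219), (-130, -152, 27), (-35, -121, 3486), (-21, -69, 12), (3, -59, 600), (8, -66, 61)]
def VCr23 : List (ℤ × ℤ × ℤ) := [(-19, -53, -1585), (110, -96, 5671), (6, -26, -622), (0, 0, 0), (0, 0, 0), (-48, 94, 6855), (-88, -6, -45), (-138, -20, 1179), (-72, -36, -36), (-236, -126, 6731), (-68, -80, -20), (-59, -105, 567), (-33, -107, -29), (-39670, -206284, 4050307), (-15, -95, -610), (9, -85, -22), (20, -118, -1183)]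
def VCr24 : List (ℤ × ℤ × ℤ) := [(-90, -96, -4329), (110, -96, 5671), (6, -26, -622), (0, 0, 0), (-28652, -27550, -2308139), (0, 0, 0), (-46020, -44250, -2628450), (-134940, -129750, -5566275), (-172796, -166150, -4708691), (-135044, -129850, 1179038), (-224588, -215950, -1818299), (-170, -200, -25), (-118, -204, -1217), (-29, -147, 2864), (-15, -95, -610), (9, -85, -22), (20, -118, -1183)]
def VCr25 : List (ℤ × ℤ × ℤ) := [(-19, -53, -1585), (81, -53, 3415), (64, -62, -85), (52, -10, 1159), (0, 0, 0), (0, 0, 0), (-20116, -10272, -468660), (-327402, -167184, -2950101), (-199656, -101952, -174168), (-236, -126, 6731), (-68, -80, -20), (-59, -105, 567), (-33, -107, -29), (-6, -304, 6887), (22, -200, -61), (70, -180, 1115), (36, -64, -12)]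
def VCr26 : List (ℤ × ℤ × ℤ) := [(50, -100, -3125), (250, -100, 6875), (2180, -872, -3052), (1770, -708, -16992), (1070, -428, -25252), (0, 0, 0), (0, 0, 0), (-25, -7, 612), (-56, -66, -27), (-74, -60, 3388), (-48, -154, 5), (-30, -204, 1179), (22, -208, -13), (41, -149, 3466), (55, -97, -8), (79, -87, 580), (160, -122, 21)]
def VCr27 : List (ℤ × ℤ × ℤ) := [(100, -86, -4349), (132810, -104850, 1065975), (21223, -16755, -533926), (16435, -12975, -631450), (44118, -34830, -2355669), (0, 0, 0), (3515, -2775, -260850), (0, 0, 0), (-6, -52, -1251), (-49, -53, 2776), (2, -140, -1219), (20, -190, -45), (72, -194, -1237), (66, -142, 2854), (80, -90, -620), (30172, -23820, -11116), (106590, -84150, -1079925)]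
def VCr28 : List (ℤ × ℤ × ℤ) := [(547250, -467650, -24750625), (1152250, -984650, 5499375), (185515, -158531, -5403546), (142835, -122059, -6175666), (388190, -331726, -22659709), (0, 0, 0), (34375, -29375, -2718750), (5610, -4794, -497046), (138710, -118534, -10956829), (0, 0, 0), (390390, -333606, -22717149), (574090, -490586, -24691089), (741730, -633842, -21624801), (288970, -246938, 1465866), (242935, -207599, -2464686), (266310, -227574, -643986), (936870, -800598, -12204861)]
def VCr29 : List (ℤ × ℤ × ℤ) := [(50, -100, -3125), (250, -100, 6875), (76, -28, -20), (70, -2, 602), (88, 6, 45), (20, 50, 3450), (0, 0, 0), (0, 0, 0), (-6, -52, -1251), (-49, -53, 2776), (2, -140, -1219), (20, -190, -45), (37478, -133850, -463121), (14042, -50150, 1165486), (55, -97, -8), (79, -87, 580), (160, -122, 21)]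
def VCr30 : List (ℤ × ℤ × ℤ) := [(53, -17, -1549), (209508, -24174, 4717959), (139828, -16134, -454441), (95, 5, -10), (138, 20, -1179), (45, 57, 2838), (25, 7, -612), (0, 0, 0), (0, 0, 0), (-92, -54, 6803), (4, -44, 16), (13, -69, 603), (39, -71, 7), (138, -232, 6959), (166, -128, 11), (214, -108, 1187), (108, -28, 24)]
def VCr31 : List (ℤ × ℤ × ℤ) := [(100, -86, -4349), (300, -86, 5651), (101, -21, -632), (95, 5, -10), (138, 20, -1179), (45, 57, 2838), (25, 7, -612), (0, 0, 0), (23638, -21854, -1872977), (0, 0, 0), (369198, -341334, -21005973), (109922, -101626, -4489173), (706066, -652778, -19003833), (277084, -256172, 2462388), (45845, -42385, -373680), (104, -80, -32), (210, -108, -1203)]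
def VCr32 : List (ℤ × ℤ × ℤ) := [(53, -17, -1549), (153, -17, 3451), (208, 10, -13), (196, 62, 1231), (72, 36, 36), (96, 166, 6927), (56, 66, 27), (6, 52, 1251), (0, 0, 0), (0, 0, 0), (57564, -98072, -2445404), (38070, -64860, -635205), (233226, -397348, -462133), (138, -232, 6959), (166, -128, 11), (214, -108, 1187), (108, -28, 24)]
def VCr33 : List (ℤ × ℤ × ℤ) := [(49, 27, -1565), (149, 27, 3435), (200, 98, -45), (188, 150, 1199), (68, 80, 20), (88, 254, 6895), (72386, 212900, -229932), (118422, 348300, -3075489), (36244, 106600, -2381444), (0, 0, 0), (0, 0, 0), (9, -25, 587), (35, -27, -9), (130, -144, 6927), (158, -40, -21), (206, -20, 1155), (104, 16, 8)]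
def VCr34 : List (ℤ × ℤ × ℤ) := [(40, 52, -2152), (140, 52, 2848), (182, 148, -1219), (170, 200, 25), (728532, 1023414, -7137879), (438396, 615842, 4916298), (279216, 392232, -9466752), (87108, 122366, -4470507), (59220, 83190, -4209555), (0, 0, 0), (92148, 129446, -9213703), (0, 0, 0), (26, -2, -596), (112, -94, 5753), (140, 10, -1195), (188, 30, -19), (95, 41, -579)]
def VCr35 : List (ℤ × ℤ × ℤ) := [(1773058, 2291030, -99221521), (168, 198, -57), (757835, 979225, -12312690), (867127, 1120445, -2123974), (3158966, 4081810, -38599725), (935212, 1208420, 5747876), (600127, 775445, -21698974), (465292, 601220, -24744124), (1281422, 1655770, -91592877), (0, 0, 0), (444110, 573850, -43480365), (74938, 96830, -8209921), (445890, 576150, -43629585), (0, 0, 0), (321557, 415495, -22935324), (467784, 604440, -24729480), (2419198, 3125930, -86044621)]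
def VCr36 : List (ℤ × ℤ × ℤ) := [(49, 27, -1565), (49600, 17856, 1023744), (200, 98, -45), (188, 150, 1199), (68, 80, 20), (88, 254, 6895), (48, 154, -5), (-2, 140, 1219), (-4, 44, -16), (-100, 34, 6771), (0, 0, 0), (0, 0, 0), (26, -2, -596), (112, -94, 5753), (140, 10, -1195), (188, 30, -19), (34300, 12348, -131712)]
def VCr37 : List (ℤ × ℤ × ℤ) := [(14, 54, -1556), (114, 54, 3444), (130, 152, -27), (118, 204, 1217), (33, 107, 29), (4022, 52286, 1164369), (2682, 34866, -122031), (-20, 190, 45), (-13, 69, -603), (-118, 84, 5597), (-9, 25, -587), (0, 0, 0), (0, 0, 0), (60, -90, 6945), (88, 14, -3), (136, 34, 1173), (69, 43, 17)]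
def VCr38 : List (ℤ × ℤ × ℤ) := [(40, 52, -2152), (168, 198, -57), (791574, 943152, -9793623), (180386, 214928, 21109), (59, 105, -567), (70, 304, 5721), (30, 204, -1179), (-20, 190, 45), (-13, 69, -603), (-118, 84, 5597), (-9, 25, -587), (0, 0, 0), (10434, 12432, -940614), (0, 0, 0), (33558, 39984, -2146998), (247126, 294448, -11373054), (635534, 757232, -19086303)]
def VCr39 : List (ℤ × ℤ × ℤ) := [(14, 54, -1556), (1350, 900, 33750), (130, 152, -27), (118, 204, 1217), (33, 107, 29), (18, 308, 6913), (-22, 208, 13), (-72, 194, 1237), (-39, 71, -7), (-170, 88, 6789), (-35, 27, 9), (-26, 2, 596), (0, 0, 0), (0, 0, 0), (438, 292, -11242), (714, 476, -7378), (1758, 1172, -2051)]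
def VCr40 : List (ℤ × ℤ × ℤ) := [(-60, 94, -3109), (140, 94, 6891), (21, 69, -12), (15, 95, 610), (-22, 200, 61), (-35, 147, 3458), (-55, 97, 8), (-80, 90, 620), (-166, 128, -11), (-129, 37, 3396), (-57044, 15358, -26328), (-18564, 4998, -154581), (-11388, 3066, -245937), (0, 0, 0), (0, 0, 0), (24, 10, 588), (50, 72, 37)]
def VCr41 : List (ℤ × ℤ × ℤ) := [(-108, 74, -4285), (92, 74, 5715), (-3, 59, -600), (-9, 85, 22), (-70, 180, -1115), (-59, 137, 2870), (-79, 87, -580), (-104, 80, 32), (-269266, 165034, -1784973), (-81468, 49932, 659628), (-209746, 128554, -4638093), (-162998, 99902, -5586625), (-110670, 67830, -5299665), (0, 0, 0), (-8587, 5263, -581700), (0, 0, 0), (2, 52, -1139)]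
def VCr42 : List (ℤ × ℤ × ℤ) := [(-60, 94, -3109), (92, 74, 5715), (-3, 59, -600), (-9, 85, 22), (-70, 180, -1115), (-19390, 46536, 990829), (-55, 97, 8), (-80, 90, 620), (-166, 128, -11), (-129, 37, 3396), (-158, 40, 21), (-140, -10, 1195), (-88, -14, 3), (-14, -52, 3474), (0, 0, 0), (0, 0, 0), (2, 52, -1139)]
def VCr43 : List (ℤ × ℤ × ℤ) := [(-55, 11, -1573), (45, 11, 3427), (-8, 66, -61), (-20, 118, 1183), (-36, 64, 12), (-120, 222, 6879), (-160, 122, -21), (-210, 108, 1203), (-108, 28, -24), (-208260, 8010, 4497615), (-69888, 2688, -260736), (-188, -30, 19), (-136, -34, -1173), (-38, -62, 2886), (-24, -10, -588), (0, 0, 0), (0, 0, 0)]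
def VC : List (List (ℤ × ℤ × ℤ)) := [VCr0, VCr1, VCr2, VCr3, VCr4, VCr5, VCr6, VCr7, VCr8, VCr9, VCr10, VCr11, VCr12, VCr13, VCr14, VCr15, VCr16, VCr17, VCr18, VCr19, VCr20, VCr21, VCr22, VCr23, VCr24, VCr25, VCr26, VCr27, VCr28, VCr29, VCr30, VCr31, VCr32, VCr33, VCr34, VCr35, VCr36, VCr37, VCr38, VCr39, VCr40, VCr41, VCr42, VCr43]
def PCr0 : List (ℤ × ℤ × ℤ) := [(0, 0, 0), (0, 0, 0), (0, 0, 0), (0, 0, 0), (0, 0, 0), (0, 0, 0), (0, 0, 0), (0, 0, 0), (0, 0, 0), (0, 0, 0), (0, 0, 0), (0, 0, 0), (0, 0, 0), (0, 0, 0), (0, 0, 0), (0, 0, 0), (0, 0, 0), (0, 0, 0), (0, 0, 0), (0, 0, 0), (0, 0, 0), (0, 0, 0), (0, 22, 242), (0, 48, 1152), (0, 48, 1152), (0, 106, 2809), (-50, 100, 3125), (-100, 86, 4349), (-547250, 467650, 24750625), (-50, 100, 3125), (-53, 17, 1549), (-100, 86, 4349), (-53, 17, 1549), (-49, -27, 1565),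 (-40, -52, 2152), (-1773058, -2291030, 99221521), (-49, -27, 1565), (-14, -54, 1556), (-40, -52, 2152), (-14, -54, 1556), (0, -94, 2209), (0, -74, 1369), (0, -74, 1369), (0, -22, 121)]
def PCr1 : List (ℤ × ℤ × ℤ) := [(0, 0, 0), (0, 0, 0), (0, 0, 0), (0, 0, 0), (0, 0, 0), (0, 0, 0), (0, 0, 0), (0, 0, 0), (0, 0, 0), (0, 0, 0), (0, 0, 0), (0, 0, 0), (0, 0, 0), (0, 0, 0), (0, 0, 0), (0, 0, 0), (0, 0, 0), (54816, 62810, 4829518), (10360, 10878, 901838), (147378, -125048, 9751511), (41810, -51980, 2584875), (77924, -180642, 3136441), (0, 0, 0), (-6, 26, 622), (-6, 26, 622), (-20108, 46614, 1044245), (-50, 100, 3125), (-100, 86, 4349), (-547250, 467650, 24750625), (-50, 100, 3125), (-53, 17, 1549), (-100, 86, 4349), (-53, 17, 1549), (-49, -27, 1565), (-40, -52, 2152), (-1773058, -2291030, 99221521), (-49, -27, 1565), (-14, -54, 1556), (-40, -52, 2152), (-14, -54, 1556), (134508, -311814, 9345249), (27060, -62730, 1891125), (134508, -311814, 9345249),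 (77924, -180642, 3136441)]
def PCr2 : List (ℤ × ℤ × ℤ) := [(0, 0, 0), (0, 0, 0), (0, 0, 0), (0, 0, 0), (0, 0, 0), (0, 0, 0), (0, 0, 0), (0, 0, 0), (0, 0, 0), (0, 0, 0), (0, 0, 0), (0, 0, 0), (0, 0, 0), (0, 0, 0), (0, 0, 0), (0, 0, 0), (7776, -7290, 118098), (0, 0, 0), (1840, 1932, 179768), (110, -96, 5671), (45408, -42570, 2013561), (33440, -31350, 1092025), (0, 0, 0), (0, 0, 0), (0, 0, 0), (-15712, 14730, 241081), (-18400, 17250, 661250), (-100, 86, 4349), (-547250, 467650, 24750625), (-18400, 17250, 661250), (-53, 17, 1549), (-100, 86, 4349), (-53, 17, 1549), (-49, -27, 1565), (-40, -52, 2152), (-1773058, -2291030, 99221521), (-49, -27, 1565), (-14, -54, 1556), (-40, -52, 2152), (-14, -54, 1556), (60, -94, 3109), (45408, -42570, 2013561), (60, -94, 3109), (33440, -31350, 1092025)]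
def PCr3 : List (ℤ × ℤ × ℤ) := [(0, 0, 0), (0, 0, 0), (0, 0, 0), (0, 0, 0), (0, 0, 0), (0, 0, 0), (0, 0, 0), (0, 0, 0), (0, 0, 0), (0, 0, 0), (0, 0, 0), (0, 0, 0), (0, 0, 0), (0, 0, 0), (0, 0, 0), (0, 0, 0), (48442, -17366, 1044245), (52, -10, 1159), (20280, 21294, 1770951), (108900, -92400, 5445000), (108, -74, 4285), (82786, -29678, 2439844), (52, -10, 1159), (0, 0, 0), (28652, 27550, 2308139), (0, 0, 0), (-1070, 428, 25252), (-44118, 34830, 2355669), (-388190, 331726, 22659709), (-48230, 17290, 1035125), (-53, 17, 1549), (-367502, 131746, 12020089), (-53, 17, 1549), (-49, -27, 1565), (-40, -52, 2152), (-1773058, -2291030, 99221521), (-49, -27, 1565), (-14, -54, 1556), (-40, -52, 2152), (-14, -54, 1556), (60, -94, 3109), (108, -74, 4285), (60, -94, 3109), (82786, -29678, 2439844)]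
def PCr4 : List (ℤ × ℤ × ℤ) := [(0, 0, 0), (0, 0, 0), (0, 0, 0), (0, 0, 0), (0, 0, 0), (0, 0, 0), (0, 0, 0), (0, 0, 0), (0, 0, 0), (0, 0, 0), (0, 0, 0), (0, 0, 0), (0, 0, 0), (0, 0, 0), (0, 0, 0), (0, 0, 0), (20840, 1042, 542882), (18960, 948, 449352), (0, 0, 0), (108900, -92400, 5445000), (108, -74, 4285), (55, -11, 1573), (18960, 948, 449352), (17320, 866, 187489), (0, 0, 0), (0, 0, 0), (0, 0, 0), (0, 0, 0), (0, 0, 0), (-9000, -450, 101250), (-38280, -1914, 915849), (-38280, -1914, 915849), (-41720, -2086, 1087849), (-49, -27, 1565), (-40, -52, 2152), (-1773058, -2291030, 99221521), (-49, -27, 1565), (-14, -54, 1556), (-40, -52, 2152), (-14, -54, 1556), (60, -94, 3109), (108, -74, 4285), (60, -94, 3109), (55, -11, 1573)]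
def PCr5 : List (ℤ × ℤ × ℤ) := [(0, 0, 0), (0, 0, 0), (0, 0, 0), (0, 0, 0), (0, 0, 0), (0, 0, 0), (0, 0, 0), (0, 0, 0), (0, 0, 0), (0, 0, 0), (0, 0, 0), (0, 0, 0), (0, 0, 0), (0, 0, 0), (0, 0, 0), (0, 0, 0), (102, 44, 3085), (276, 138, 9522), (1000, 1050, 63750), (108900, -92400, 5445000), (108, -74, 4285), (55, -11, 1573), (102, 44, 3085), (364, 182, 8281), (46020, 44250, 2628450), (20116, 10272, 468660), (0, 0, 0), (-3515, 2775, 260850), (-34375, 29375, 2718750), (0, 0, 0), (-25, -7, 612), (-25, -7, 612), (-356, -178, 7921), (-49, -27, 1565), (-40, -52, 2152), (-1773058, -2291030, 99221521), (-49, -27, 1565), (-14, -54, 1556), (-40, -52, 2152), (-14, -54, 1556), (60, -94, 3109), (108, -74, 4285), (60, -94, 3109), (55, -11, 1573)]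
def PCr6 : List (ℤ × ℤ × ℤ) := [(0, 0, 0), (0, 0, 0), (0, 0, 0), (0, 0, 0), (0, 0, 0), (0, 0, 0), (0, 0, 0), (0, 0, 0), (0, 0, 0), (0, 0, 0), (0, 0, 0), (0, 0, 0), (0, 0, 0), (0, 0, 0), (0, 0, 0), (0, 0, 0), (102, 44, 3085), (90, 96, 4329), (40000, 42000, 2000000), (108900, -92400, 5445000), (108, -74, 4285), (55, -11, 1573), (102, 44, 3085), (298162, 346700, 12020089), (90, 96, 4329), (298162, 346700, 12020089), (122550, 142500, 2030625), (0, 0, 0), (-5610, 4794, 497046), (0, 0, 0), (0, 0, 0), (0, 0, 0), (-122894, -142900, 2042041), (-297302, -345700, 11950849), (-40, -52, 2152), (-1773058, -2291030, 99221521), (-297302, -345700, 11950849), (-14, -54, 1556), (-40, -52, 2152), (-14, -54, 1556), (60, -94, 3109), (108, -74, 4285), (60, -94, 3109), (55, -11, 1573)]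
def PCr7 : List (ℤ × ℤ × ℤ) := [(0, 0, 0), (0, 0, 0), (0, 0, 0), (0, 0, 0), (0, 0, 0), (0, 0, 0), (0, 0, 0), (0, 0, 0), (0, 0, 0), (0, 0, 0), (0, 0, 0), (0, 0, 0), (0, 0, 0), (0, 0, 0), (0, 0, 0), (0, 0, 0), (102, 44, 3085), (90, 96, 4329), (40000, 42000, 2000000), (108900, -92400, 5445000), (108, -74, 4285), (55, -11, 1573), (102, 44, 3085), (19, 53, 1585), (90, 96, 4329), (19, 53, 1585), (75650, 235850, 4950625), (6, 52, 1251), (-138710, 118534, 10956829), (6, 52, 1251), (0, 0, 0), (-23638, 21854, 1872977), (0, 0, 0), (-36244, -106600, 2381444), (-59220, -83190, 4209555), (-1281422, -1655770, 91592877), (-19244, -59996, 1281424), (-14, -54, 1556), (-29206, -91054, 2951524), (-14, -54, 1556), (60, -94, 3109), (108, -74, 4285), (60, -94, 3109), (55, -11, 1573)]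
def PCr8 : List (ℤ × ℤ × ℤ) := [(0, 0, 0), (0, 0, 0), (0, 0, 0), (0, 0, 0), (0, 0, 0), (0, 0, 0), (0, 0, 0), (0, 0, 0), (0, 0, 0), (0, 0, 0), (0, 0, 0), (0, 0, 0), (0, 0, 0), (0, 0, 0), (0, 0, 0), (0, 0, 0), (102, 44, 3085), (90, 96, 4329), (40000, 42000, 2000000), (108900, -92400, 5445000), (108, -74, 4285), (55, -11, 1573), (102, 44, 3085), (19, 53, 1585), (90, 96, 4329), (19, 53, 1585), (-52000, 514800, 13520000), (-95140, 941886, 22629049), (0, 0, 0), (-95140, 941886, 22629049), (-44260, 438174, 4897369), (0, 0, 0), (0, 0, 0), (0, 0, 0), (0, 0, 0), (0, 0, 0), (43660, -432234, 4765489), (47480, -470052, 11271752), (47480, -470052, 11271752), (52060, -515394, 13551218), (60, -94, 3109), (108, -74, 4285), (60, -94, 3109), (55, -11, 1573)]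
def PCr9 : List (ℤ × ℤ × ℤ) := [(0, 0, 0), (0, 0, 0), (0, 0, 0), (0, 0, 0), (0, 0, 0), (0, 0, 0), (0, 0, 0), (0, 0, 0), (0, 0, 0), (0, 0, 0), (0, 0, 0), (0, 0, 0), (0, 0, 0), (0, 0, 0), (0, 0, 0), (0, 0, 0), (102, 44, 3085), (90, 96, 4329), (40000, 42000, 2000000), (108900, -92400, 5445000), (108, -74, 4285), (55, -11, 1573), (102, 44, 3085), (19, 53, 1585), (90, 96, 4329), (19, 53, 1585), (-50, 100, 3125), (-186678, 338786, 11950849), (-390390, 333606, 22717149), (-50, 100, 3125), (-30564, 55468, 1281424), (-369198, 341334, 21005973), (-57564, 98072, 2445404), (0, 0, 0), (-92148, -129446, 9213703), (-444110, -573850, 43480365), (0, 0, 0), (9, -25, 587), (9, -25, 587), (30618, -55566, 1285956), (60, -94, 3109), (108, -74, 4285), (60, -94, 3109), (55, -11, 1573)]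
def PCr10 : List (ℤ × ℤ × ℤ) := [(0, 0, 0), (0, 0, 0), (0, 0, 0), (0, 0, 0), (0, 0, 0), (0, 0, 0), (0, 0, 0), (0, 0, 0), (0, 0, 0), (0, 0, 0), (0, 0, 0), (0, 0, 0), (0, 0, 0), (0, 0, 0), (0, 0, 0), (0, 0, 0), (102, 44, 3085), (90, 96, 4329), (40000, 42000, 2000000), (112, -94, 5753), (108, -74, 4285), (55, -11, 1573), (102, 44, 3085), (19, 53, 1585), (90, 96, 4329), (19, 53, 1585), (-50, 100, 3125), (-100, 86, 4349), (-547250, 467650, 24750625), (-50, 100, 3125), (-22334, 17180, 737881), (-100, 86, 4349), (-22334, 17180, 737881), (-9542, 7340, 134689), (0, 0, 0), (-74938, -96830, 8209921), (0, 0, 0), (0, 0, 0), (0, 0, 0), (4654, -3580, 64082), (11180, -8600, 369800), (108, -74, 4285), (11180, -8600, 369800), (55, -11, 1573)]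
def PCr11 : List (ℤ × ℤ × ℤ) := [(0, 0, 0), (0, 0, 0), (0, 0, 0), (0, 0, 0), (0, 0, 0), (0, 0, 0), (0, 0, 0), (0, 0, 0), (0, 0, 0), (0, 0, 0), (0, 0, 0), (0, 0, 0), (0, 0, 0), (0, 0, 0), (0, 0, 0), (0, 0, 0), (102, 44, 3085), (90, 96, 4329), (40000, 42000, 2000000), (74250, -63000, 4893750), (92718, -24038, 2948089), (55, -11, 1573), (102, 44, 3085), (19, 53, 1585), (90, 96, 4329), (19, 53, 1585), (-50, 100, 3125), (-100, 86, 4349), (-547250, 467650, 24750625), (-50, 100, 3125), (-53, 17, 1549), (-100, 86, 4349), (-53, 17, 1549), (-15309, 3969, 321489), (-26, 2, 596), (-445890, -576150, 43629585), (-26, 2, 596), (0, 0, 0), (-10434, -12432, 940614), (0, 0, 0), (11388, -3066, 245937), (110670, -67830, 5299665), (61506, -15946, 1297321), (55, -11, 1573)]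
def PCr12 : List (ℤ × ℤ × ℤ) := [(0, 0, 0), (0, 0, 0), (0, 0, 0), (0, 0, 0), (0, 0, 0), (0, 0, 0), (0, 0, 0), (0, 0, 0), (0, 0, 0), (0, 0, 0), (0, 0, 0), (0, 0, 0), (0, 0, 0), (0, 0, 0), (0, 0, 0), (0, 0, 0), (102, 44, 3085), (90, 96, 4329), (40000, 42000, 2000000), (0, 0, 0), (470646, 76064, 11300258), (1043262, 168608, 27762361), (102, 44, 3085), (19, 53, 1585), (90, 96, 4329), (19, 53, 1585), (-50, 100, 3125), (-100, 86, 4349), (-547250, 467650, 24750625), (-50, 100, 3125), (-53, 17, 1549), (-100, 86, 4349), (-53, 17, 1549), (-1046034, -169056, 27910089), (-474408, -76672, 11481632), (0, 0, 0), (-474408, -76672, 11481632), (-222750, -36000, 2531250), (0, 0, 0), (0, 0, 0), (0, 0, 0), (0, 0, 0), (219582, 35488, 2459762), (470646, 76064, 11300258)]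
def PCr13 : List (ℤ × ℤ × ℤ) := [(0, 0, 0), (0, 0, 0), (0, 0, 0), (0, 0, 0), (0, 0, 0), (0, 0, 0), (0, 0, 0), (0, 0, 0), (0, 0, 0), (0, 0, 0), (0, 0, 0), (0, 0, 0), (0, 0, 0), (0, 0, 0), (0, 0, 0), (0, 0, 0), (287358, 183420, 9345249), (90, 96, 4329), (40000, 42000, 2000000), (32802, -27832, 2786182), (24, 10, 588), (211970, 135300, 5085025), (287358, 183420, 9345249), (19, 53, 1585), (90, 96, 4329), (19, 53, 1585), (-50, 100, 3125), (-100, 86, 4349), (-547250, 467650, 24750625), (-50, 100, 3125), (-53, 17, 1549), (-100, 86, 4349), (-53, 17, 1549), (-49, -27, 1565), (-161680, -103200, 5916800), (-321557, -415495, 22935324), (-49, -27, 1565), (-107066, -68340, 2594642), (-33558, -39984, 2146998), (-438, -292, 11242), (0, 0, 0), (8587, -5263, 581700), (0, 0, 0), (24, 10, 588)]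
def PCr14 : List (ℤ × ℤ × ℤ) := [(0, 0, 0), (0, 0, 0), (0, 0, 0), (0, 0, 0), (0, 0, 0), (0, 0, 0), (0, 0, 0), (0, 0, 0), (0, 0, 0), (0, 0, 0), (0, 0, 0), (0, 0, 0), (0, 0, 0), (0, 0, 0), (0, 0, 0), (0, 0, 0), (45510, 66420, 1891125), (407328, 466730, 22729751), (67880, 71274, 3908191), (15906, -13496, 1474438), (0, 0, 0), (106634, 155628, 2076481), (45510, 66420, 1891125), (19, 53, 1585), (315018, 459756, 18122049), (19, 53, 1585), (-50, 100, 3125), (-100, 86, 4349), (-547250, 467650, 24750625), (-50, 100, 3125), (-53, 17, 1549), (-100, 86, 4349), (-53, 17, 1549), (-49, -27, 1565), (-40, -52, 2152), (-1773058, -2291030, 99221521), (-49, -27, 1565), (-127058, -185436, 5896178), (-40, -52, 2152), (-127058, -185436, 5896178), (-52836, -77112, 1019592), (0, 0, 0), (0, 0, 0), (0, 0, 0)]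
def PCr15 : List (ℤ × ℤ × ℤ) := [(0, 0, 0), (0, 0, 0), (0, 0, 0), (0, 0, 0), (0, 0, 0), (0, 0, 0), (0, 0, 0), (0, 0, 0), (0, 0, 0), (0, 0, 0), (0, 0, 0), (0, 0, 0), (0, 0, 0), (0, 0, 0), (0, 0, 0), (0, 0, 0), (67276, 149842, 4389759), (265440, 304150, 18898775), (1560, 1638, 111891), (77682, -65912, 6382871), (85766, -106628, 7233319), (0, 0, 0), (322, 1610, 25921), (142, 710, 20164), (570, 2850, 81225), (142, 710, 20164), (-50, 100, 3125), (-100, 86, 4349), (-547250, 467650, 24750625), (-50, 100, 3125), (-53, 17, 1549), (-100, 86, 4349), (-53, 17, 1549), (-49, -27, 1565), (-40, -52, 2152), (-1773058, -2291030, 99221521), (-49, -27, 1565), (-14, -54, 1556), (-40, -52, 2152), (-14, -54, 1556), (-410, -2050, 42025), (-2, -52, 1139), (-2, -52, 1139), (0, 0, 0)]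
def PCr16 : List (ℤ × ℤ × ℤ) := [(0, 0, 0), (0, 0, 0), (-7776, 7290, -118098), (-48442, 17366, -1044245), (-20840, -1042, -542882), (-102, -44, -3085), (-102, -44, -3085), (-102, -44, -3085), (-102, -44, -3085), (-102, -44, -3085), (-102, -44, -3085), (-102, -44, -3085), (-102, -44, -3085), (-287358, -183420, -9345249), (-45510, -66420, -1891125), (-67276, -149842, -4389759), (0, 0, 0), (0, 0, 0), (0, 0, 0), (0, 0, 0), (0, 0, 0), (0, 0, 0), (0, 0, 0), (-6, 26, 622), (-6, 26, 622), (-64, 62, 85), (-2180, 872, 3052), (-21223, 16755, 533926), (-185515, 158531, 5403546), (-76, 28, 20), (-139828, 16134, 454441), (-101, 21, 632), (-208, -10, 13), (-200, -98, 45), (-182, -148, 1219), (-757835, -979225, 12312690), (-200, -98, 45), (-130, -152, 27), (-791574, -943152, 9793623), (-130, -152, 27), (-169092, -376614, -2140551), (-24860, -55370, -889875), (-24860, -55370, -889875), (-67276, -149842, -4389759)]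
def PCr17 : List (ℤ × ℤ × ℤ) := [(0, 0, 0), (-54816, -62810, -4829518), (0, 0, 0), (-52, 10, -1159), (-18960, -948, -449352), (-276, -138, -9522), (-90, -96, -4329), (-90, -96, -4329), (-90, -96, -4329), (-90, -96, -4329), (-90, -96, -4329), (-90, -96, -4329), (-90, -96, -4329), (-90, -96, -4329), (-407328, -466730, -22729751), (-265440, -304150, -18898775), (0, 0, 0), (0, 0, 0), (0, 0, 0), (0, 0, 0), (0, 0, 0), (0, 0, 0), (0, 0, 0), (0, 0, 0), (0, 0, 0), (-52, 10, -1159), (-1770, 708, 16992), (-16435, 12975, 631450), (-142835, 122059, 6175666), (-70, 2, -602), (-95, -5, 10), (-95, -5, 10), (-196, -62, -1231), (-188, -150, -1199), (-459840, -526900, -95800), (-168, -198, 57), (-188, -150, -1199), (-405216, -464310, -4887918), (-168, -198, 57), (-405216, -464310, -4887918), (-570720, -653950, -21728975), (-407328, -466730, -22729751), (-407328, -466730, -22729751), (-265440, -304150, -18898775)]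
def PCr18 : List (ℤ × ℤ × ℤ) := [(0, 0, 0), (-10360, -10878, -901838), (-1840, -1932, -179768), (-20280, -21294, -1770951), (0, 0, 0), (-1000, -1050, -63750), (-40000, -42000, -2000000), (-40000, -42000, -2000000), (-40000, -42000, -2000000), (-40000, -42000, -2000000), (-40000, -42000, -2000000), (-40000, -42000, -2000000), (-40000, -42000, -2000000), (-40000, -42000, -2000000), (-67880, -71274, -3908191), (-1560, -1638, -111891), (0, 0, 0), (0, 0, 0), (0, 0, 0), (0, 0, 0), (0, 0, 0), (0, 0, 0), (-1840, -1932, -179768), (-1840, -1932, -179768), (0, 0, 0), (0, 0, 0), (0, 0, 0), (0, 0, 0), (0, 0, 0), (-1000, -1050, -63750), (-83880, -88074, -3990591), (-83880, -88074, -3990591), (-108120, -113526, -3505791), (-141880, -148974, -1606791), (-77840, -81732, -210168), (-168, -198, 57), (-141880, -148974, -1606791), (-68280, -71694, -1000302), (-168, -198, 57), (-68280, -71694, -1000302), (-95480, -100254, -3850231), (-67880, -71274, -3908191), (-67880, -71274, -3908191), (-1560, -1638, -111891)]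
def PCr19 : List (ℤ × ℤ × ℤ) := [(0, 0, 0), (-147378, 125048, -9751511), (-110, 96, -5671), (-108900, 92400, -5445000), (-108900, 92400, -5445000), (-108900, 92400, -5445000), (-108900, 92400, -5445000), (-108900, 92400, -5445000), (-108900, 92400, -5445000), (-108900, 92400, -5445000), (-112, 94, -5753), (-74250, 63000, -4893750), (0, 0, 0), (-32802, 27832, -2786182), (-15906, 13496, -1474438), (-77682, 65912, -6382871), (0, 0, 0), (0, 0, 0), (0, 0, 0), (0, 0, 0), (0, 0, 0), (0, 0, 0), (-147378, 125048, -9751511), (-110, 96, -5671), (-110, 96, -5671), (-274362, 232792, -10155551), (-364650, 309400, -5939375), (-203082, 172312, -1372342), (-1152250, 984650, -5499375), (-364650, 309400, -5939375), (-364650, 309400, -5939375), (-203082, 172312, -1372342), (-364650, 309400, -5939375), (-274626, 233016, -10148679), (-112, 94, -5753), (0, 0, 0), (-112, 94, -5753), (-74250, 63000, -4893750), (0, 0, 0), (0, 0, 0), (0, 0, 0), (0, 0, 0), (-15906, 13496, -1474438), (-15906, 13496, -1474438)]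
def PCr20 : List (ℤ × ℤ × ℤ) := [(0, 0, 0), (-41810, 51980, -2584875), (-45408, 42570, -2013561), (-108, 74, -4285), (-108, 74, -4285), (-108, 74, -4285), (-108, 74, -4285), (-108, 74, -4285), (-108, 74, -4285), (-108, 74, -4285), (-108, 74, -4285), (-92718, 24038, -2948089), (-470646, -76064, -11300258), (-24, -10, -588), (0, 0, 0), (-85766, 106628, -7233319), (0, 0, 0), (0, 0, 0), (0, 0, 0), (0, 0, 0), (0, 0, 0), (0, 0, 0), (-41810, 51980, -2584875), (-313982, 390356, -13395151), (-313982, 390356, -13395151), (-80438, 100004, -2135955), (-79, 87, -580), (-30172, 23820, 11116), (-266310, 227574, 643986), (-79, 87, -580), (-214, 108, -1187), (-104, 80, 32), (-214, 108, -1187), (-206, 20, -1155), (-188, -30, 19), (-467784, -604440, 24729480), (-188, -30, 19), (-136, -34, -1173), (-247126, -294448, 11373054), (-714, -476, 7378), (-24, -10, -588), (0, 0, 0), (0, 0, 0), (0, 0, 0)]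
def PCr21 : List (ℤ × ℤ × ℤ) := [(0, 0, 0), (-77924, 180642, -3136441), (-33440, 31350, -1092025), (-82786, 29678, -2439844), (-55, 11, -1573), (-55, 11, -1573), (-55, 11, -1573), (-55, 11, -1573), (-55, 11, -1573), (-55, 11, -1573), (-55, 11, -1573), (-55, 11, -1573), (-1043262, -168608, -27762361), (-211970, -135300, -5085025), (-106634, -155628, -2076481), (0, 0, 0), (0, 0, 0), (0, 0, 0), (0, 0, 0), (0, 0, 0), (0, 0, 0), (0, 0, 0), (-33638, 137610, -1025959), (-60830, 248850, 1562225), (-60830, 248850, 1562225), (-36, 64, 12), (-160, 122, -21), (-106590, 84150, 1079925), (-936870, 800598, 12204861), (-160, 122, -21), (-108, 28, -24), (-210, 108, 1203), (-108, 28, -24), (-104, -16, -8), (-95, -41, 579), (-2419198, -3125930, 86044621), (-34300, -12348, 131712), (-69, -43, -17), (-635534, -757232, 19086303), (-1758, -1172, 2051), (-50, -72, -37), (-2, -52, 1139), (-2, -52, 1139), (0, 0, 0)]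
def PCr22 : List (ℤ × ℤ × ℤ) := [(0, -22, -242), (0, 0, 0), (0, 0, 0), (-52, 10, -1159), (-18960, -948, -449352), (-102, -44, -3085), (-102, -44, -3085), (-102, -44, -3085), (-102, -44, -3085), (-102, -44, -3085), (-102, -44, -3085), (-102, -44, -3085), (-102, -44, -3085), (-287358, -183420, -9345249), (-45510, -66420, -1891125), (-322, -1610, -25921), (0, 0, 0), (0, 0, 0), (1840, 1932, 179768), (147378, -125048, 9751511), (41810, -51980, 2584875), (33638, -137610, 1025959), (0, 0, 0), (0, 0, 0), (0, 0, 0), (-52, 10, -1159), (-1770, 708, 16992), (-16435, 12975, 631450), (-142835, 122059, 6175666), (-70, 2, -602), (-95, -5, 10), (-95, -5, 10), (-35542, -8202, -124397), (-200, -98, 45), (-182, -148, 1219), (-757835, -979225, 12312690), (-200, -98, 45), (-130, -152, 27), (-791574, -943152, 9793623), (-130, -152, 27), (-21, -69, 12), (3, -59, 600), (3, -59, 600), (8, -66, 61)]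
def PCr23 : List (ℤ × ℤ × ℤ) := [(0, -48, -1152), (6, -26, -622), (0, 0, 0), (0, 0, 0), (-17320, -866, -187489), (-364, -182, -8281), (-298162, -346700, -12020089), (-19, -53, -1585), (-19, -53, -1585), (-19, -53, -1585), (-19, -53, -1585), (-19, -53, -1585), (-19, -53, -1585), (-19, -53, -1585), (-19, -53, -1585), (-142, -710, -20164), (6, -26, -622), (0, 0, 0), (1840, 1932, 179768), (110, -96, 5671), (313982, -390356, 13395151), (60830, -248850, -1562225), (0, 0, 0), (0, 0, 0), (0, 0, 0), (0, 0, 0), (-1070, 428, 25252), (-44118, 34830, 2355669), (-388190, 331726, 22659709), (-88, -6, -45), (-138, -20, 1179), (-138, -20, 1179), (-72, -36, -36), (-68, -80, -20), (-728532, -1023414, 7137879), (-3158966, -4081810, 38599725), (-68, -80, -20), (-33, -107, -29), (-59, -105, 567), (-33, -107, -29), (-15, -95, -610), (9, -85, -22), (9, -85, -22), (20, -118, -1183)]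
def PCr24 : List (ℤ × ℤ × ℤ) := [(0, -48, -1152), (6, -26, -622), (0, 0, 0), (-28652, -27550, -2308139), (0, 0, 0), (-46020, -44250, -2628450), (-90, -96, -4329), (-90, -96, -4329), (-90, -96, -4329), (-90, -96, -4329), (-90, -96, -4329), (-90, -96, -4329), (-90, -96, -4329), (-90, -96, -4329), (-315018, -459756, -18122049), (-570, -2850, -81225), (6, -26, -622), (0, 0, 0), (0, 0, 0), (110, -96, 5671), (313982, -390356, 13395151), (60830, -248850, -1562225), (0, 0, 0), (0, 0, 0), (0, 0, 0), (0, 0, 0), (0, 0, 0), (0, 0, 0), (0, 0, 0), (-46020, -44250, -2628450), (-134940, -129750, -5566275), (-134940, -129750, -5566275), (-172796, -166150, -4708691), (-224588, -215950, -1818299), (-170, -200, -25), (-867127, -1120445, 2123974), (-224588, -215950, -1818299), (-118, -204, -1217), (-180386, -214928, -21109), (-118, -204, -1217), (-15, -95, -610), (9, -85, -22), (9, -85, -22), (20, -118, -1183)]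
def PCr25 : List (ℤ × ℤ × ℤ) := [(0, -106, -2809), (20108, -46614, -1044245), (15712, -14730, -241081), (0, 0, 0), (0, 0, 0), (-20116, -10272, -468660), (-298162, -346700, -12020089), (-19, -53, -1585), (-19, -53, -1585), (-19, -53, -1585), (-19, -53, -1585), (-19, -53, -1585), (-19, -53, -1585), (-19, -53, -1585), (-19, -53, -1585), (-142, -710, -20164), (64, -62, -85), (52, -10, 1159), (0, 0, 0), (274362, -232792, 10155551), (80438, -100004, 2135955), (36, -64, -12), (52, -10, 1159), (0, 0, 0), (0, 0, 0), (0, 0, 0), (0, 0, 0), (0, 0, 0), (0, 0, 0), (-20116, -10272, -468660), (-327402, -167184, -2950101), (-327402, -167184, -2950101), (-199656, -101952, -174168), (-68, -80, -20), (-728532, -1023414, 7137879), (-3158966, -4081810, 38599725), (-68, -80, -20), (-33, -107, -29), (-59, -105, 567), (-33, -107, -29), (22, -200, -61), (70, -180, 1115), (70, -180, 1115), (36, -64, -12)]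
def PCr26 : List (ℤ × ℤ × ℤ) := [(50, -100, -3125), (50, -100, -3125), (18400, -17250, -661250), (1070, -428, -25252), (0, 0, 0), (0, 0, 0), (-122550, -142500, -2030625), (-75650, -235850, -4950625), (52000, -514800, -13520000), (50, -100, -3125), (50, -100, -3125), (50, -100, -3125), (50, -100, -3125), (50, -100, -3125), (50, -100, -3125), (50, -100, -3125), (2180, -872, -3052), (1770, -708, -16992), (0, 0, 0), (364650, -309400, 5939375), (79, -87, 580), (160, -122, 21), (1770, -708, -16992), (1070, -428, -25252), (0, 0, 0), (0, 0, 0), (0, 0, 0), (0, 0, 0), (0, 0, 0), (0, 0, 0), (-25, -7, 612), (-25, -7, 612), (-56, -66, -27), (-72386, -212900, 229932), (-279216, -392232, 9466752), (-600127, -775445, 21698974), (-48, -154, 5), (-2682, -34866, 122031), (-30, -204, 1179), (22, -208, -13), (55, -97, -8), (79, -87, 580), (55, -97, -8), (160, -122, 21)]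
def PCr27 : List (ℤ × ℤ × ℤ) := [(100, -86, -4349), (100, -86, -4349), (100, -86, -4349), (44118, -34830, -2355669), (0, 0, 0), (3515, -2775, -260850), (0, 0, 0), (-6, -52, -1251), (95140, -941886, -22629049), (186678, -338786, -11950849), (100, -86, -4349), (100, -86, -4349), (100, -86, -4349), (100, -86, -4349), (100, -86, -4349), (100, -86, -4349), (21223, -16755, -533926), (16435, -12975, -631450), (0, 0, 0), (203082, -172312, 1372342), (30172, -23820, -11116), (106590, -84150, -1079925), (16435, -12975, -631450), (44118, -34830, -2355669), (0, 0, 0), (0, 0, 0), (0, 0, 0), (0, 0, 0), (0, 0, 0), (0, 0, 0), (0, 0, 0), (0, 0, 0), (-6, -52, -1251), (-118422, -348300, 3075489), (-87108, -122366, 4470507), (-465292, -601220, 24744124), (2, -140, -1219), (20, -190, -45), (20, -190, -45), (72, -194, -1237), (80, -90, -620), (30172, -23820, -11116), (80, -90, -620), (106590, -84150, -1079925)]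
def PCr28 : List (ℤ × ℤ × ℤ) := [(547250, -467650, -24750625), (547250, -467650, -24750625), (547250, -467650, -24750625), (388190, -331726, -22659709), (0, 0, 0), (34375, -29375, -2718750), (5610, -4794, -497046), (138710, -118534, -10956829), (0, 0, 0), (390390, -333606, -22717149), (547250, -467650, -24750625), (547250, -467650, -24750625), (547250, -467650, -24750625), (547250, -467650, -24750625), (547250, -467650, -24750625), (547250, -467650, -24750625), (185515, -158531, -5403546), (142835, -122059, -6175666), (0, 0, 0), (1152250, -984650, 5499375), (266310, -227574, -643986), (936870, -800598, -12204861), (142835, -122059, -6175666), (388190, -331726, -22659709), (0, 0, 0), (0, 0, 0), (0, 0, 0), (0, 0, 0), (0, 0, 0), (5610, -4794, -497046), (5610, -4794, -497046), (0, 0, 0), (0, 0, 0), (0, 0, 0), (0, 0, 0), (0, 0, 0), (390390, -333606, -22717149), (574090, -490586, -24691089), (574090, -490586, -24691089), (741730, -633842, -21624801), (242935, -207599, -2464686), (266310, -227574, -643986), (242935, -207599, -2464686), (936870, -800598, -12204861)]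
def PCr29 : List (ℤ × ℤ × ℤ) := [(50, -100, -3125), (50, -100, -3125), (18400, -17250, -661250), (48230, -17290, -1035125), (9000, 450, -101250), (0, 0, 0), (0, 0, 0), (-6, -52, -1251), (95140, -941886, -22629049), (50, -100, -3125), (50, -100, -3125), (50, -100, -3125), (50, -100, -3125), (50, -100, -3125), (50, -100, -3125), (50, -100, -3125), (76, -28, -20), (70, -2, 602), (1000, 1050, 63750), (364650, -309400, 5939375), (79, -87, 580), (160, -122, 21), (70, -2, 602), (88, 6, 45), (46020, 44250, 2628450), (20116, 10272, 468660), (0, 0, 0), (0, 0, 0), (-5610, 4794, 497046), (0, 0, 0), (0, 0, 0), (0, 0, 0), (-6, -52, -1251), (-118422, -348300, 3075489), (-87108, -122366, 4470507), (-465292, -601220, 24744124), (2, -140, -1219), (20, -190, -45), (20, -190, -45), (37478, -133850, -463121), (55, -97, -8), (79, -87, 580), (55, -97, -8), (160, -122, 21)]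
def PCr30 : List (ℤ × ℤ × ℤ) := [(53, -17, -1549), (53, -17, -1549), (53, -17, -1549), (53, -17, -1549), (38280, 1914, -915849), (25, 7, -612), (0, 0, 0), (0, 0, 0), (44260, -438174, -4897369), (30564, -55468, -1281424), (22334, -17180, -737881), (53, -17, -1549), (53, -17, -1549), (53, -17, -1549), (53, -17, -1549), (53, -17, -1549), (139828, -16134, -454441), (95, 5, -10), (83880, 88074, 3990591), (364650, -309400, 5939375), (214, -108, 1187), (108, -28, 24), (95, 5, -10), (138, 20, -1179), (134940, 129750, 5566275), (327402, 167184, 2950101), (25, 7, -612), (0, 0, 0), (-5610, 4794, 497046), (0, 0, 0), (0, 0, 0), (0, 0, 0), (0, 0, 0), (-36244, -106600, 2381444), (-59220, -83190, 4209555), (-1281422, -1655770, 91592877), (4, -44, 16), (13, -69, 603), (13, -69, 603), (39, -71, 7), (166, -128, 11), (269266, -165034, 1784973), (166, -128, 11), (108, -28, 24)]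
def PCr31 : List (ℤ × ℤ × ℤ) := [(100, -86, -4349), (100, -86, -4349), (100, -86, -4349), (367502, -131746, -12020089), (38280, 1914, -915849), (25, 7, -612), (0, 0, 0), (23638, -21854, -1872977), (0, 0, 0), (369198, -341334, -21005973), (100, -86, -4349), (100, -86, -4349), (100, -86, -4349), (100, -86, -4349), (100, -86, -4349), (100, -86, -4349), (101, -21, -632), (95, 5, -10), (83880, 88074, 3990591), (203082, -172312, 1372342), (104, -80, -32), (210, -108, -1203), (95, 5, -10), (138, 20, -1179), (134940, 129750, 5566275), (327402, 167184, 2950101), (25, 7, -612), (0, 0, 0), (0, 0, 0), (0, 0, 0), (0, 0, 0), (0, 0, 0), (0, 0, 0), (0, 0, 0), (0, 0, 0), (0, 0, 0), (369198, -341334, -21005973), (109922, -101626, -4489173), (109922, -101626, -4489173), (706066, -652778, -19003833), (45845, -42385, -373680), (104, -80, -32), (45845, -42385, -373680), (210, -108, -1203)]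
def PCr32 : List (ℤ × ℤ × ℤ) := [(53, -17, -1549), (53, -17, -1549), (53, -17, -1549), (53, -17, -1549), (41720, 2086, -1087849), (356, 178, -7921), (122894, 142900, -2042041), (0, 0, 0), (0, 0, 0), (57564, -98072, -2445404), (22334, -17180, -737881), (53, -17, -1549), (53, -17, -1549), (53, -17, -1549), (53, -17, -1549), (53, -17, -1549), (208, 10, -13), (196, 62, 1231), (108120, 113526, 3505791), (364650, -309400, 5939375), (214, -108, 1187), (108, -28, 24), (35542, 8202, 124397), (72, 36, 36), (172796, 166150, 4708691), (199656, 101952, 174168), (56, 66, 27), (6, 52, 1251), (0, 0, 0), (6, 52, 1251), (0, 0, 0), (0, 0, 0), (0, 0, 0), (0, 0, 0), (0, 0, 0), (0, 0, 0), (57564, -98072, -2445404), (38070, -64860, -635205), (38070, -64860, -635205), (233226, -397348, -462133), (166, -128, 11), (269266, -165034, 1784973), (166, -128, 11), (108, -28, 24)]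
def PCr33 : List (ℤ × ℤ × ℤ) := [(49, 27, -1565), (49, 27, -1565), (49, 27, -1565), (49, 27, -1565), (49, 27, -1565), (49, 27, -1565), (297302, 345700, -11950849), (36244, 106600, -2381444), (0, 0, 0), (0, 0, 0), (9542, -7340, -134689), (15309, -3969, -321489), (1046034, 169056, -27910089), (49, 27, -1565), (49, 27, -1565), (49, 27, -1565), (200, 98, -45), (188, 150, 1199), (141880, 148974, 1606791), (274626, -233016, 10148679), (206, -20, 1155), (104, 16, 8), (200, 98, -45), (68, 80, 20), (224588, 215950, 1818299), (68, 80, 20), (72386, 212900, -229932), (118422, 348300, -3075489), (0, 0, 0), (118422, 348300, -3075489), (36244, 106600, -2381444), (0, 0, 0), (0, 0, 0), (0, 0, 0), (0, 0, 0), (0, 0, 0), (0, 0, 0), (9, -25, 587), (9, -25, 587), (35, -27, -9), (57044, -15358, 26328), (209746, -128554, 4638093), (158, -40, -21), (69888, -2688, 260736)]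
def PCr34 : List (ℤ × ℤ × ℤ) := [(40, 52, -2152), (40, 52, -2152), (40, 52, -2152), (40, 52, -2152), (40, 52, -2152), (40, 52, -2152), (40, 52, -2152), (59220, 83190, -4209555), (0, 0, 0), (92148, 129446, -9213703), (0, 0, 0), (26, -2, -596), (474408, 76672, -11481632), (161680, 103200, -5916800), (40, 52, -2152), (40, 52, -2152), (182, 148, -1219), (459840, 526900, 95800), (77840, 81732, 210168), (112, -94, 5753), (188, 30, -19), (95, 41, -579), (182, 148, -1219), (728532, 1023414, -7137879), (170, 200, 25), (728532, 1023414, -7137879), (279216, 392232, -9466752), (87108, 122366, -4470507), (0, 0, 0), (87108, 122366, -4470507), (59220, 83190, -4209555), (0, 0, 0), (0, 0, 0), (0, 0, 0), (0, 0, 0), (0, 0, 0), (0, 0, 0), (0, 0, 0), (0, 0, 0), (26, -2, -596), (18564, -4998, 154581), (162998, -99902, 5586625), (140, 10, -1195), (188, 30, -19)]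
def PCr35 : List (ℤ × ℤ × ℤ) := [(1773058, 2291030, -99221521), (1773058, 2291030, -99221521), (1773058, 2291030, -99221521), (1773058, 2291030, -99221521), (1773058, 2291030, -99221521), (1773058, 2291030, -99221521), (1773058, 2291030, -99221521), (1281422, 1655770, -91592877), (0, 0, 0), (444110, 573850, -43480365), (74938, 96830, -8209921), (445890, 576150, -43629585), (0, 0, 0), (321557, 415495, -22935324), (1773058, 2291030, -99221521), (1773058, 2291030, -99221521), (757835, 979225, -12312690), (168, 198, -57), (168, 198, -57), (0, 0, 0), (467784, 604440, -24729480), (2419198, 3125930, -86044621), (757835, 979225, -12312690), (3158966, 4081810, -38599725), (867127, 1120445, -2123974), (3158966, 4081810, -38599725), (600127, 775445, -21698974), (465292, 601220, -24744124), (0, 0, 0), (465292, 601220, -24744124), (1281422, 1655770, -91592877), (0, 0, 0), (0, 0, 0), (0, 0, 0), (0, 0, 0), (0, 0, 0), (74938, 96830, -8209921), (74938, 96830, -8209921), (0, 0, 0), (0, 0, 0), (0, 0, 0), (0, 0, 0), (321557, 415495, -22935324), (467784, 604440, -24729480)]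
def PCr36 : List (ℤ × ℤ × ℤ) := [(49, 27, -1565), (49, 27, -1565), (49, 27, -1565), (49, 27, -1565), (49, 27, -1565), (49, 27, -1565), (297302, 345700, -11950849), (19244, 59996, -1281424), (-43660, 432234, -4765489), (0, 0, 0), (0, 0, 0), (26, -2, -596), (474408, 76672, -11481632), (49, 27, -1565), (49, 27, -1565), (49, 27, -1565), (200, 98, -45), (188, 150, 1199), (141880, 148974, 1606791), (112, -94, 5753), (188, 30, -19), (34300, 12348, -131712), (200, 98, -45), (68, 80, 20), (224588, 215950, 1818299), (68, 80, 20), (48, 154, -5), (-2, 140, 1219), (-390390, 333606, 22717149), (-2, 140, 1219), (-4, 44, -16), (-369198, 341334, 21005973), (-57564, 98072, 2445404), (0, 0, 0), (0, 0, 0), (-74938, -96830, 8209921), (0, 0, 0), (0, 0, 0), (0, 0, 0), (26, -2, -596), (18564, -4998, 154581), (162998, -99902, 5586625), (140, 10, -1195), (188, 30, -19)]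
def PCr37 : List (ℤ × ℤ × ℤ) := [(14, 54, -1556), (14, 54, -1556), (14, 54, -1556), (14, 54, -1556), (14, 54, -1556), (14, 54, -1556), (14, 54, -1556), (14, 54, -1556), (-47480, 470052, -11271752), (-9, 25, -587), (0, 0, 0), (0, 0, 0), (222750, 36000, -2531250), (107066, 68340, -2594642), (127058, 185436, -5896178), (14, 54, -1556), (130, 152, -27), (405216, 464310, 4887918), (68280, 71694, 1000302), (74250, -63000, 4893750), (136, 34, 1173), (69, 43, 17), (130, 152, -27), (33, 107, 29), (118, 204, 1217), (33, 107, 29), (2682, 34866, -122031), (-20, 190, 45), (-574090, 490586, 24691089), (-20, 190, 45), (-13, 69, -603), (-109922, 101626, 4489173), (-38070, 64860, 635205), (-9, 25, -587), (0, 0, 0), (-74938, -96830, 8209921), (0, 0, 0), (0, 0, 0), (0, 0, 0), (0, 0, 0), (11388, -3066, 245937), (110670, -67830, 5299665), (88, 14, -3), (136, 34, 1173)]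
def PCr38 : List (ℤ × ℤ × ℤ) := [(40, 52, -2152), (40, 52, -2152), (40, 52, -2152), (40, 52, -2152), (40, 52, -2152), (40, 52, -2152), (40, 52, -2152), (29206, 91054, -2951524), (-47480, 470052, -11271752), (-9, 25, -587), (0, 0, 0), (10434, 12432, -940614), (0, 0, 0), (33558, 39984, -2146998), (40, 52, -2152), (40, 52, -2152), (791574, 943152, -9793623), (168, 198, -57), (168, 198, -57), (0, 0, 0), (247126, 294448, -11373054), (635534, 757232, -19086303), (791574, 943152, -9793623), (59, 105, -567), (180386, 214928, 21109), (59, 105, -567), (30, 204, -1179), (-20, 190, 45), (-574090, 490586, 24691089), (-20, 190, 45), (-13, 69, -603), (-109922, 101626, 4489173), (-38070, 64860, 635205), (-9, 25, -587), (0, 0, 0), (0, 0, 0), (0, 0, 0), (0, 0, 0), (0, 0, 0), (0, 0, 0), (0, 0, 0), (0, 0, 0), (33558, 39984, -2146998), (247126, 294448, -11373054)]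
def PCr39 : List (ℤ × ℤ × ℤ) := [(14, 54, -1556), (14, 54, -1556), (14, 54, -1556), (14, 54, -1556), (14, 54, -1556), (14, 54, -1556), (14, 54, -1556), (14, 54, -1556), (-52060, 515394, -13551218), (-30618, 55566, -1285956), (-4654, 3580, -64082), (0, 0, 0), (0, 0, 0), (438, 292, -11242), (127058, 185436, -5896178), (14, 54, -1556), (130, 152, -27), (405216, 464310, 4887918), (68280, 71694, 1000302), (0, 0, 0), (714, 476, -7378), (1758, 1172, -2051), (130, 152, -27), (33, 107, 29), (118, 204, 1217), (33, 107, 29), (-22, 208, 13), (-72, 194, 1237), (-741730, 633842, 21624801), (-37478, 133850, 463121), (-39, 71, -7), (-706066, 652778, 19003833), (-233226, 397348, 462133), (-35, 27, 9), (-26, 2, 596), (0, 0, 0), (-26, 2, 596), (0, 0, 0), (0, 0, 0), (0, 0, 0), (0, 0, 0), (0, 0, 0), (438, 292, -11242), (714, 476, -7378)]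
def PCr40 : List (ℤ × ℤ × ℤ) := [(0, 94, -2209), (-134508, 311814, -9345249), (-60, 94, -3109), (-60, 94, -3109), (-60, 94, -3109), (-60, 94, -3109), (-60, 94, -3109), (-60, 94, -3109), (-60, 94, -3109), (-60, 94, -3109), (-11180, 8600, -369800), (-11388, 3066, -245937), (0, 0, 0), (0, 0, 0), (52836, 77112, -1019592), (410, 2050, -42025), (169092, 376614, 2140551), (570720, 653950, 21728975), (95480, 100254, 3850231), (0, 0, 0), (24, 10, 588), (50, 72, 37), (21, 69, -12), (15, 95, 610), (15, 95, 610), (-22, 200, 61), (-55, 97, 8), (-80, 90, 620), (-242935, 207599, 2464686), (-55, 97, 8), (-166, 128, -11), (-45845, 42385, 373680), (-166, 128, -11), (-57044, 15358, -26328), (-18564, 4998, -154581), (0, 0, 0), (-18564, 4998, -154581), (-11388, 3066, -245937), (0, 0, 0), (0, 0, 0), (0, 0, 0), (0, 0, 0), (0, 0, 0), (24, 10, 588)]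
def PCr41 : List (ℤ × ℤ × ℤ) := [(0, 74, -1369), (-27060, 62730, -1891125), (-45408, 42570, -2013561), (-108, 74, -4285), (-108, 74, -4285), (-108, 74, -4285), (-108, 74, -4285), (-108, 74, -4285), (-108, 74, -4285), (-108, 74, -4285), (-108, 74, -4285), (-110670, 67830, -5299665), (0, 0, 0), (-8587, 5263, -581700), (0, 0, 0), (2, 52, -1139), (24860, 55370, 889875), (407328, 466730, 22729751), (67880, 71274, 3908191), (0, 0, 0), (0, 0, 0), (2, 52, -1139), (-3, 59, -600), (-9, 85, 22), (-9, 85, 22), (-70, 180, -1115), (-79, 87, -580), (-30172, 23820, 11116), (-266310, 227574, 643986), (-79, 87, -580), (-269266, 165034, -1784973), (-104, 80, 32), (-269266, 165034, -1784973), (-209746, 128554, -4638093), (-162998, 99902, -5586625), (0, 0, 0), (-162998, 99902, -5586625), (-110670, 67830, -5299665), (0, 0, 0), (0, 0, 0), (0, 0, 0), (0, 0, 0), (0, 0, 0), (0, 0, 0)]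
def PCr42 : List (ℤ × ℤ × ℤ) := [(0, 74, -1369), (-134508, 311814, -9345249), (-60, 94, -3109), (-60, 94, -3109), (-60, 94, -3109), (-60, 94, -3109), (-60, 94, -3109), (-60, 94, -3109), (-60, 94, -3109), (-60, 94, -3109), (-11180, 8600, -369800), (-61506, 15946, -1297321), (-219582, -35488, -2459762), (0, 0, 0), (0, 0, 0), (2, 52, -1139), (24860, 55370, 889875), (407328, 466730, 22729751), (67880, 71274, 3908191), (15906, -13496, 1474438), (0, 0, 0), (2, 52, -1139), (-3, 59, -600), (-9, 85, 22), (-9, 85, 22), (-70, 180, -1115), (-55, 97, 8), (-80, 90, 620), (-242935, 207599, 2464686), (-55, 97, 8), (-166, 128, -11), (-45845, 42385, 373680), (-166, 128, -11), (-158, 40, 21), (-140, -10, 1195), (-321557, -415495, 22935324), (-140, -10, 1195), (-88, -14, 3), (-33558, -39984, 2146998), (-438, -292, 11242), (0, 0, 0), (0, 0, 0), (0, 0, 0), (0, 0, 0)]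
def PCr43 : List (ℤ × ℤ × ℤ) := [(0, 22, -121), (-77924, 180642, -3136441), (-33440, 31350, -1092025), (-82786, 29678, -2439844), (-55, 11, -1573), (-55, 11, -1573), (-55, 11, -1573), (-55, 11, -1573), (-55, 11, -1573), (-55, 11, -1573), (-55, 11, -1573), (-55, 11, -1573), (-470646, -76064, -11300258), (-24, -10, -588), (0, 0, 0), (0, 0, 0), (67276, 149842, 4389759), (265440, 304150, 18898775), (1560, 1638, 111891), (15906, -13496, 1474438), (0, 0, 0), (0, 0, 0), (-8, 66, -61), (-20, 118, 1183), (-20, 118, 1183), (-36, 64, 12), (-160, 122, -21), (-106590, 84150, 1079925), (-936870, 800598, 12204861), (-160, 122, -21), (-108, 28, -24), (-210, 108, 1203), (-108, 28, -24), (-69888, 2688, -260736), (-188, -30, 19), (-467784, -604440, 24729480), (-188, -30, 19), (-136, -34, -1173), (-247126, -294448, 11373054), (-714, -476, 7378), (-24, -10, -588), (0, 0, 0), (0, 0, 0), (0, 0, 0)]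
def PC : List (List (ℤ × ℤ × ℤ)) := [PCr0, PCr1, PCr2, PCr3, PCr4, PCr5, PCr6, PCr7, PCr8, PCr9, PCr10, PCr11, PCr12, PCr13, PCr14, PCr15, PCr16, PCr17, PCr18, PCr19, PCr20, PCr21, PCr22, PCr23, PCr24, PCr25, PCr26, PCr27, PCr28, PCr29, PCr30, PCr31, PCr32, PCr33, PCr34, PCr35, PCr36, PCr37, PCr38, PCr39, PCr40, PCr41, PCr42, PCr43]
def vcert (u v w : Vx) : ℤ × ℤ × ℤ := (VC.getD (eidx u v) []).getD (ι w) (0, 0, 0)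
abbrev vcheckP (u v w : Vx) : Prop :=
  (vcert u v w).1 * (gZ u).1 + (vcert u v w).2.1 * (gZ u).2 ≤ (vcert u v w).2.2 ∧
  (vcert u v w).1 * (gZ v).1 + (vcert u v w).2.1 * (gZ v).2 ≤ (vcert u v w).2.2 ∧
  (vcert u v w).2.2 < (vcert u v w).1 * (gZ w).1 + (vcert u v w).2.1 * (gZ w).2
def pcert (u v u' v' : Vx) : ℤ × ℤ × ℤ := (PC.getD (eidx u v) []).getD (eidx u' v') (0, 0, 0)
abbrev pcheckP (u v u' v' : Vx) : Prop :=
  (pcert u v u' v').1 * (gZ u).1 + (pcert u v u' v').2.1 * (gZ u).2 ≤ (pcert u v u' v').2.2 ∧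
  (pcert u v u' v').1 * (gZ v).1 + (pcert u v u' v').2.1 * (gZ v).2 ≤ (pcert u v u' v').2.2 ∧
  (pcert u v u' v').2.2 < (pcert u v u' v').1 * (gZ u').1 + (pcert u v u' v').2.1 * (gZ u').2 ∧
  (pcert u v u' v').2.2 < (pcert u v u' v').1 * (gZ v').1 + (pcert u v u' v').2.1 * (gZ v').2
def crossZ (s p p' : Vx) : ℤ :=
  ((gZ p).1 - (gZ s).1) * ((gZ p').2 - (gZ s).2)
    - ((gZ p).2 - (gZ s).2) * ((gZ p').1 - (gZ s).1)

lemma gZinj : ∀ u v : Vx, gZ u = gZ v → u = v := by decide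

lemma S1 : ∀ u v w : Vx, extremalGraph.Adj u v → w ≠ u → w ≠ v → vcheckP u v w := by decide

set_option maxHeartbeats 0 in
lemma S2 : ∀ u v u' v' : Vx, extremalGraph.Adj u v → extremalGraph.Adj u' v' →
    u ≠ u' → u ≠ v' → v ≠ u' → v ≠ v' → pcheckP u v u' v' := by decide

lemma S3 : ∀ s p p' : Vx, extremalGraph.Adj s p → extremalGraph.Adj s p' → p ≠ p' →
    crossZ s p p' ≠ 0 := by decide

lemma fR_inj : Function.Injective fR := by
  intro u v h
  have h1 : ((gZ u).1 : ℝ) = ((gZ v).1 : ℝ) := congrArg Prod.fst h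
  have h2 : ((gZ u).2 : ℝ) = ((gZ v).2 : ℝ) := congrArg Prod.snd h
  exact gZinj u v (Prod.ext (by exact_mod_cast h1) (by exact_mod_cast h2))

lemma crossR (s p p' : Vx) (h : crossZ s p p' ≠ 0) :
    ((fR p).1 - (fR s).1) * ((fR p').2 - (fR s).2)
      - ((fR p).2 - (fR s).2) * ((fR p').1 - (fR s).1) ≠ 0 := by
  intro hc
  apply h
  simp only [fR] at hc
  unfold crossZ
  exact_mod_cast hc

lemma sharedMem (u v u' v' s : Vx) (hs1 : s = u ∨ s = v) (hs2 : s = u' ∨ s = v') :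
    ({fR s} : Set (ℝ × ℝ)) ⊆ (fR '' {u, v}) ∩ (fR '' {u', v'}) := by
  rintro x hx
  rw [Set.mem_singleton_iff] at hx
  subst hx
  constructor
  · rcases hs1 with rfl | rfl
    · exact ⟨s, Or.inl rfl, rfl⟩
    · exact ⟨s, Or.inr rfl, rfl⟩
  · rcases hs2 with rfl | rfl
    · exact ⟨s, Or.inl rfl, rfl⟩
    · exact ⟨s, Or.inr rfl, rfl⟩

lemma planar_main : IsPlanar extremalGraph := by
  refine ⟨fR, fun u v _ => segm (fR u) (fR v), fR_inj, fun u v h => segm_cont _ _,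
    ?_, fun u v h => ⟨segm_zero _ _, segm_one _ _⟩, ?_, ?_⟩
  · intro u v h
    exact segm_inj (fun hc => h.ne (fR_inj hc))
  · intro u v h w hwu hwv
    obtain ⟨h1, h2, h3⟩ := S1 u v w h hwu hwv
    refine segm_avoid (a := ((vcert u v w).1 : ℝ)) (b := ((vcert u v w).2.1 : ℝ))
      (c := ((vcert u v w).2.2 : ℝ)) ?_ ?_ ?_
    · simp only [fR]
      exact_mod_cast h1
    · simp only [fR]
      exact_mod_cast h2
    · simp only [fR]
      exact_mod_cast h3
  · intro u v h u' v' h' hne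
    by_cases e1 : u = u'
    · subst e1
      have hvv : v ≠ v' := fun hc => hne (by rw [hc])
      refine (segm_shared (crossR u v v' (S3 u v v' h h' hvv))).trans ?_
      exact sharedMem u v u v' u (Or.inl rfl) (Or.inl rfl)
    · by_cases e2 : u = v'
      · subst e2
        have hvu' : v ≠ u' := fun hc => hne (by rw [hc, Set.pair_comm])
        rw [segm_range_comm (fR u') (fR u)]
        refine (segm_shared (crossR u v u' (S3 u v u' h (h'.symm) hvu'))).trans ?_
        exact sharedMem u v u' u u (Or.inl rfl) (Or.inr rfl)
      · by_cases e3 : v = u'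
        · subst e3
          have huv' : u ≠ v' := fun hc => hne (by rw [hc, Set.pair_comm])
          rw [segm_range_comm (fR u) (fR v)]
          refine (segm_shared (crossR v u v' (S3 v u v' h.symm h' huv'))).trans ?_
          exact sharedMem u v v v' v (Or.inr rfl) (Or.inl rfl)
        · by_cases e4 : v = v'
          · subst e4
            rw [segm_range_comm (fR u) (fR v), segm_range_comm (fR u') (fR v)]
            refine (segm_shared (crossR v u u' (S3 v u u' h.symm h'.symm e1))).trans ?_
            exact sharedMem u v u' v v (Or.inr rfl) (Or.inr rfl)
          · obtain ⟨c1, c2, c3, c4⟩ := S2 u v u' v' h h' e1 e2 e3 e4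
            intro x hx
            exact absurd hx.2 (fun hx2 =>
              segm_disj (p := fR u) (q := fR v) (r := fR u') (s := fR v')
                (a := ((pcert u v u' v').1 : ℝ)) (b := ((pcert u v u' v').2.1 : ℝ))
                (c := ((pcert u v u' v').2.2 : ℝ))
                (by simp only [fR]; exact_mod_cast c1) (by simp only [fR]; exact_mod_cast c2)
                (by simp only [fR]; exact_mod_cast c3) (by simp only [fR]; exact_mod_cast c4)
                x hx.1 hx2)

/-- The 17-vertex graph above is a simple planar graph with minimum degree at least 3
and maximum degree 16, which is positively curved in the Lin–Lu–Yau sense. -/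
theorem extremalGraph_properties :
    IsPlanar extremalGraph ∧
    (∀ u, 3 ≤ extremalGraph.degree u) ∧
    (∀ u, extremalGraph.degree u ≤ 16) ∧
    (∃ u, extremalGraph.degree u = 16) ∧
    PositivelyCurved extremalGraph := by
  refine ⟨planar_main, ?_, ?_, ⟨none, ?_⟩, curvature_all⟩
  · have H : ∀ u : Vx, 3 ≤ (Finset.univ.filter (extremalGraph.Adj u)).card := by decide
    intro u
    rw [deg_eq]
    exact H u
  · have H : ∀ u : Vx, (Finset.univ.filter (extremalGraph.Adj u)).card ≤ 16 := by decide
    intro u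
    rw [deg_eq]
    exact H u
  · rw [deg_eq]
    decide
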